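/- Let X be a metric space that admits a D-quasi-ruling. Then there exists a geodesic metric space X_g and a map ι: X → X_g that is a (1, 4D)-quasi-isometry. -/

import Mathlib

noncomputable section

open Filter Metric Set Topology

/-! ## Gromov products, hyperbolicity, and the visual boundary -/

/-- The Gromov product of `x` and `y` with respect to `o`. -/
def gromovProduct {X : Type*} [MetricSpace X] (o x y : X) : ℝ :=
  (dist o x + dist o y - dist x y) / 2

/-- A metric space is `δ`-hyperbolic if the Gromov product four-point condition holds. -/
def IsDeltaHyperbolic (X : Type*) [MetricSpace X] (δ : ℝ) : Prop :=
  ∀ o x y z : X, min (gromovProduct o x z) (gromovProduct o z y) - δ ≤ gromovProduct o x y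

/-- A metric space is Gromov hyperbolic if it is `δ`-hyperbolic for some `δ ≥ 0`. -/
def GromovHyperbolic (X : Type*) [MetricSpace X] : Prop :=
  ∃ δ : ℝ, 0 ≤ δ ∧ IsDeltaHyperbolic X δ

/-- A sequence converges to infinity if the Gromov products `(x_i | x_j)_o` tend to `∞`
(this is independent of the basepoint, so we quantify over all basepoints). -/
def ConvergesToInfinity {X : Type*} [MetricSpace X] (s : ℕ → X) : Prop :=
  ∀ o : X, Tendsto (fun p : ℕ × ℕ => gromovProduct o (s p.1) (s p.2)) atTop atTop

/-- Two sequences converging to infinity are equivalent if `(x_i | y_i)_o → ∞`. -/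
def AsympEquiv {X : Type*} [MetricSpace X] (s t : ℕ → X) : Prop :=
  ∀ o : X, Tendsto (fun i => gromovProduct o (s i) (t i)) atTop atTop

/-- Sequences converging to infinity. -/
abbrev BoundarySeq (X : Type*) [MetricSpace X] : Type _ :=
  { s : ℕ → X // ConvergesToInfinity s }

/-- The visual boundary (boundary at infinity) of a metric space:
equivalence classes of sequences converging to infinity. -/
def GromovBoundary (X : Type*) [MetricSpace X] : Type _ :=
  Quot (fun s t : BoundarySeq X => AsympEquiv s.1 t.1)

/-- The boundary point represented by a sequence converging to infinity. -/
def boundaryPt {X : Type*} [MetricSpace X] (s : BoundarySeq X) : GromovBoundary X :=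
  Quot.mk (fun s t : BoundarySeq X => AsympEquiv s.1 t.1) s

/-- The Gromov product of two boundary points with respect to `o`:
the infimum over representatives of the liminf of the Gromov products. -/
noncomputable def boundaryGromovProduct {X : Type*} [MetricSpace X] (o : X)
    (ξ η : GromovBoundary X) : ℝ :=
  sInf { r : ℝ | ∃ s t : BoundarySeq X, boundaryPt s = ξ ∧ boundaryPt t = η ∧
    r = liminf (fun i => gromovProduct o (s.1 i) (t.1 i)) atTop }

/-- The visual topology on the boundary at infinity, generated by the neighbourhood
bases `U_{o,R}(ξ) = {η | (ξ|η)_o > R}`. -/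
def visualTopology (X : Type*) [MetricSpace X] : TopologicalSpace (GromovBoundary X) :=
  TopologicalSpace.generateFrom
    { U : Set (GromovBoundary X) | ∃ (o : X) (ξ : GromovBoundary X) (R : ℝ),
        U = { η | R < boundaryGromovProduct o ξ η } }

/-- A path `γ : [a,∞) → X` defines the boundary point `ξ` if every monotone unbounded
sequence of parameters yields a sequence converging to infinity representing `ξ`. -/
def DefinesBoundaryPoint {X : Type*} [MetricSpace X] (γ : ℝ → X) (a : ℝ)
    (ξ : GromovBoundary X) : Prop :=
  ∀ t : ℕ → ℝ, (∀ i, a ≤ t i) → Monotone t → Tendsto t atTop atTop →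
    ∃ h : ConvergesToInfinity (fun i => γ (t i)), boundaryPt ⟨fun i => γ (t i), h⟩ = ξ

/-! ## Quasi-rulers, quasi-geodesics, coarse maps -/

/-- An unparametrised `D`-quasi-ruler on a (closed) interval `I ⊆ ℝ`. -/
structure IsQuasiRuler {X : Type*} [MetricSpace X] (D : ℝ) (I : Set ℝ) (γ : ℝ → X) : Prop where
  ruled : ∀ t ∈ I, ∀ s ∈ I, ∀ r ∈ I, t < s → s < r →
    dist (γ t) (γ s) + dist (γ s) (γ r) ≤ dist (γ t) (γ r) + D
  noJump : ∀ t₀ ∈ I, ∃ c : ℝ, c < D ∧ ∃ ε : ℝ, 0 < ε ∧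
    ∀ t ∈ I, |t - t₀| < ε → dist (γ t) (γ t₀) ≤ c

/-- A metric space admits a `D`-quasi-ruling if any two points are connected by an
unparametrised `D`-quasi-ruler. -/
def AdmitsQuasiRuling (X : Type*) [MetricSpace X] (D : ℝ) : Prop :=
  ∀ x y : X, ∃ (a b : ℝ) (γ : ℝ → X), a ≤ b ∧ γ a = x ∧ γ b = y ∧
    IsQuasiRuler D (Icc a b) γ

/-- `(K,C)`-coarsely Lipschitz maps. -/
def CoarselyLipschitzWith {Y X : Type*} [MetricSpace Y] [MetricSpace X]
    (K C : ℝ) (f : Y → X) : Prop :=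
  ∀ x y : Y, dist (f x) (f y) ≤ K * dist x y + C

def CoarselyLipschitz {Y X : Type*} [MetricSpace Y] [MetricSpace X] (f : Y → X) : Prop :=
  ∃ K C : ℝ, 1 ≤ K ∧ 0 ≤ C ∧ CoarselyLipschitzWith K C f

/-- `(K,C)`-quasi-isometric embeddings. -/
def IsQuasiIsometricEmbeddingWith {Y X : Type*} [MetricSpace Y] [MetricSpace X]
    (K C : ℝ) (f : Y → X) : Prop :=
  ∀ x y : Y, dist x y / K - C ≤ dist (f x) (f y) ∧ dist (f x) (f y) ≤ K * dist x y + C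

/-- `(K,C)`-quasi-isometries. -/
def IsQuasiIsometryWith {Y X : Type*} [MetricSpace Y] [MetricSpace X]
    (K C : ℝ) (f : Y → X) : Prop :=
  IsQuasiIsometricEmbeddingWith K C f ∧ ∀ x : X, ∃ y : Y, dist (f y) x ≤ C

def IsQuasiIsometry {Y X : Type*} [MetricSpace Y] [MetricSpace X] (f : Y → X) : Prop :=
  ∃ K C : ℝ, 1 ≤ K ∧ 0 ≤ C ∧ IsQuasiIsometryWith K C f

/-- `(K,C)`-quasi-geodesics parametrised over a subinterval `I ⊆ ℝ`. -/
def IsQuasiGeodesicOn {X : Type*} [MetricSpace X] (K C : ℝ) (I : Set ℝ) (γ : ℝ → X) : Prop :=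
  ∀ s ∈ I, ∀ t ∈ I, |s - t| / K - C ≤ dist (γ s) (γ t) ∧ dist (γ s) (γ t) ≤ K * |s - t| + C

/-- An unparametrised quasi-geodesic: a path admitting an orientation-preserving
reparametrisation which is a quasi-geodesic. -/
def IsUnparamQuasiGeodesicOn {X : Type*} [MetricSpace X] (I : Set ℝ) (γ : ℝ → X) : Prop :=
  ∃ (φ : ℝ → ℝ) (K C : ℝ), 1 ≤ K ∧ 0 ≤ C ∧ StrictMonoOn φ I ∧ BijOn φ I I ∧
    IsQuasiGeodesicOn K C I (fun t => γ (φ t))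

/-- A geodesic metric space: any two points are joined by an isometrically embedded segment. -/
def GeodesicSpace (Y : Type*) [MetricSpace Y] : Prop :=
  ∀ x y : Y, ∃ γ : ℝ → Y, γ 0 = x ∧ γ (dist x y) = y ∧
    ∀ s ∈ Icc (0 : ℝ) (dist x y), ∀ t ∈ Icc (0 : ℝ) (dist x y), dist (γ s) (γ t) = |s - t|

/-! ## Group actions -/

/-- The action of `G` is by isometries. -/
def IsometricAction (G X : Type*) [Group G] [MetricSpace X] [MulAction G X] : Prop :=
  ∀ g : G, Isometry (fun x : X => g • x)

/-- A cobounded action: translates of some bounded set cover the space. -/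
def CoboundedAction (G X : Type*) [Group G] [MetricSpace X] [MulAction G X] : Prop :=
  ∃ B : Set X, Bornology.IsBounded B ∧ ∀ x : X, ∃ g : G, g • x ∈ B

/-- A cocompact action: translates of some compact set cover the space. -/
def CocompactAction (G Y : Type*) [Group G] [MetricSpace Y] [MulAction G Y] : Prop :=
  ∃ K : Set Y, IsCompact K ∧ ∀ y : Y, ∃ g : G, g • y ∈ K

/-- A geometric action: isometric, properly discontinuous and cocompact. -/
def GeometricAction (G Y : Type*) [Group G] [MetricSpace Y] [MulAction G Y] : Prop :=
  IsometricAction G Y ∧ ProperlyDiscontinuousSMul G Y ∧ CocompactAction G Y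

/-- Coarse `G`-equivariance of a map between two `G`-spaces. -/
def CoarselyEquivariant (G : Type*) {Y X : Type*} [Group G] [MetricSpace Y] [MetricSpace X]
    [MulAction G Y] [MulAction G X] (f : Y → X) : Prop :=
  ∃ C : ℝ, 0 ≤ C ∧ ∀ (g : G) (y : Y), dist (f (g • y)) (g • f y) ≤ C

/-- A hyperbolic projection `(G, Y, X)`: a finitely generated group `G` acting geometrically
on a geodesic metric space `Y` and coboundedly by isometries on a Gromov hyperbolic space `X`
admitting a `D`-quasi-ruling. -/
structure HyperbolicProjection (G Y X : Type*) [Group G] [MetricSpace Y] [MetricSpace X]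
    [MulAction G Y] [MulAction G X] : Prop where
  fg : Group.FG G
  geodesicY : GeodesicSpace Y
  geometricY : GeometricAction G Y
  isometricX : IsometricAction G X
  coboundedX : CoboundedAction G X
  hyperbolicX : GromovHyperbolic X
  ruledX : ∃ D : ℝ, 0 ≤ D ∧ AdmitsQuasiRuling X D

/-- An induced projection map of a hyperbolic projection: any coarsely `G`-equivariant,
coarsely Lipschitz map `Y → X`. -/
def InducedProjection (G : Type*) {Y X : Type*} [Group G] [MetricSpace Y] [MetricSpace X]
    [MulAction G Y] [MulAction G X] (p : Y → X) : Prop :=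
  CoarselyEquivariant G p ∧ CoarselyLipschitz p
/-! ## Morse and sublinearly Morse boundaries -/

/-- Finite Hausdorff distance between two subsets. -/
def FiniteHausdorffDist {Y : Type*} [MetricSpace Y] (A B : Set Y) : Prop :=
  EMetric.hausdorffEdist A B < ⊤

/-- A quasi-geodesic ray, parametrised over `[0, ∞)`. -/
def IsQuasiGeodesicRay {Y : Type*} [MetricSpace Y] (γ : ℝ → Y) : Prop :=
  ∃ K C : ℝ, 1 ≤ K ∧ 0 ≤ C ∧ IsQuasiGeodesicOn K C (Ici 0) γ

/-- A geodesic ray, parametrised over `[0, ∞)`. -/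
def IsGeodesicRay {Y : Type*} [MetricSpace Y] (γ : ℝ → Y) : Prop :=
  ∀ s ∈ Ici (0 : ℝ), ∀ t ∈ Ici (0 : ℝ), dist (γ s) (γ t) = |s - t|

/-- A Morse subset: there is a gauge `μ` such that every `(K,C)`-quasi-geodesic segment with
endpoints on `Z` stays in the `μ(K,C)`-neighbourhood of `Z`. -/
def IsMorseSet {Y : Type*} [MetricSpace Y] (Z : Set Y) : Prop :=
  ∃ μ : ℝ → ℝ → ℝ, ∀ K C : ℝ, 1 ≤ K → 0 ≤ C → ∀ (a b : ℝ) (β : ℝ → Y), a ≤ b →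
    IsQuasiGeodesicOn K C (Icc a b) β → β a ∈ Z → β b ∈ Z →
    ∀ t ∈ Icc a b, infDist (β t) Z ≤ μ K C

/-- Morse quasi-geodesic rays. -/
abbrev MorseRay (Y : Type*) [MetricSpace Y] : Type _ :=
  { γ : ℝ → Y // IsQuasiGeodesicRay γ ∧ IsMorseSet (γ '' Ici 0) }

/-- The Morse boundary `∂₁ Y`: Morse quasi-geodesic rays modulo finite Hausdorff distance. -/
def MorseBoundary (Y : Type*) [MetricSpace Y] : Type _ :=
  Quot (fun γ γ' : MorseRay Y => FiniteHausdorffDist (γ.1 '' Ici 0) (γ'.1 '' Ici 0))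

def morsePt {Y : Type*} [MetricSpace Y] (γ : MorseRay Y) : MorseBoundary Y :=
  Quot.mk (fun γ γ' : MorseRay Y => FiniteHausdorffDist (γ.1 '' Ici 0) (γ'.1 '' Ici 0)) γ

/-- Morse-injectivity of a projection map: every unbounded Morse geodesic (ray or bi-infinite)
in `Y` projects to an unbounded unparametrised quasi-geodesic in `X`. -/
def MorseInjective {Y X : Type*} [MetricSpace Y] [MetricSpace X] (p : Y → X) : Prop :=
  ∀ (I : Set ℝ) (γ : ℝ → Y), (I = Ici (0 : ℝ) ∨ I = univ) →
    (∀ s ∈ I, ∀ t ∈ I, dist (γ s) (γ t) = |s - t|) →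
    IsMorseSet (γ '' I) → ¬ Bornology.IsBounded (γ '' I) →
    IsUnparamQuasiGeodesicOn I (fun t => p (γ t)) ∧
      ¬ Bornology.IsBounded ((fun t => p (γ t)) '' I)

/-- `f` is the boundary map `∂p` induced by the projection `p`: the class of every Morse
quasi-geodesic ray `γ` is sent to the boundary point defined by `p ∘ γ`. -/
def IsInducedBoundaryMap {Y X : Type*} [MetricSpace Y] [MetricSpace X] (p : Y → X)
    (f : MorseBoundary Y → GromovBoundary X) : Prop :=
  ∀ γ : MorseRay Y, DefinesBoundaryPoint (fun t => p (γ.1 t)) 0 (f (morsePt γ))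

/-- `f` is the boundary map `∂Ψ` induced by a quasi-isometry `Ψ` on Morse boundaries:
the class of `γ` is sent to the class of `Ψ ∘ γ`. -/
def IsInducedMorseBoundaryMap {Y Y' : Type*} [MetricSpace Y] [MetricSpace Y'] (Ψ : Y → Y')
    (f : MorseBoundary Y → MorseBoundary Y') : Prop :=
  ∀ γ : MorseRay Y,
    ∃ h : IsQuasiGeodesicRay (fun t => Ψ (γ.1 t)) ∧
        IsMorseSet ((fun t => Ψ (γ.1 t)) '' Ici 0),
      f (morsePt γ) = morsePt (⟨fun t => Ψ (γ.1 t), h⟩ : MorseRay Y')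

/-- `f` is the boundary map `∂Φ` induced by a map `Φ` between hyperbolic spaces:
the class of a sequence `(x_i)` is sent to the class of `(Φ x_i)`. -/
def IsInducedGromovBoundaryMap {X X' : Type*} [MetricSpace X] [MetricSpace X'] (Φ : X → X')
    (f : GromovBoundary X → GromovBoundary X') : Prop :=
  ∀ s : BoundarySeq X, ∃ h : ConvergesToInfinity (fun i => Φ (s.1 i)),
    f (boundaryPt s) = boundaryPt (⟨fun i => Φ (s.1 i), h⟩ : BoundarySeq X')

/-! ## Sublinear functions and `κ`-Morse boundaries -/

/-- A sublinear function: monotone increasing, concave, non-negative, with `κ(t)/t → 0`. -/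
def IsSublinear (κ : ℝ → ℝ) : Prop :=
  (∀ t ∈ Ici (0 : ℝ), 0 ≤ κ t) ∧ MonotoneOn κ (Ici 0) ∧ ConcaveOn ℝ (Ici 0) κ ∧
    Tendsto (fun t => κ t / t) atTop (nhds 0)

/-- The `(κ, n)`-neighbourhood of `Z` with respect to the basepoint `o`. -/
def kappaNbhd {Y : Type*} [MetricSpace Y] (o : Y) (κ : ℝ → ℝ) (Z : Set Y) (n : ℝ) : Set Y :=
  { y | infDist y Z ≤ n * κ (dist o y) }

/-- `Z` is `κ`-Morse with a specified Morse gauge `N`. -/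
def IsKappaMorseWith {Y : Type*} [MetricSpace Y] (o : Y) (κ : ℝ → ℝ) (N : ℝ → ℝ → ℝ)
    (Z : Set Y) : Prop :=
  ∀ K C : ℝ, 1 ≤ K → 0 ≤ C → ∀ (a b : ℝ) (β : ℝ → Y), a ≤ b →
    IsQuasiGeodesicOn K C (Icc a b) β → β a ∈ Z → β b ∈ Z →
    ∀ t ∈ Icc a b, β t ∈ kappaNbhd o κ Z (N K C)

/-- `Z` is `κ`-Morse. -/
def IsKappaMorse {Y : Type*} [MetricSpace Y] (o : Y) (κ : ℝ → ℝ) (Z : Set Y) : Prop :=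
  ∃ N : ℝ → ℝ → ℝ, IsKappaMorseWith o κ N Z

/-- Two sets `κ`-fellow travel (are `κ`-close) if each lies in a `κ`-neighbourhood
of the other. -/
def KappaClose {Y : Type*} [MetricSpace Y] (o : Y) (κ : ℝ → ℝ) (A B : Set Y) : Prop :=
  (∃ n : ℝ, 0 < n ∧ A ⊆ kappaNbhd o κ B n) ∧ (∃ n : ℝ, 0 < n ∧ B ⊆ kappaNbhd o κ A n)

/-- `κ`-Morse quasi-geodesic rays. -/
abbrev KappaMorseRay (Y : Type*) [MetricSpace Y] (o : Y) (κ : ℝ → ℝ) : Type _ :=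
  { γ : ℝ → Y // IsQuasiGeodesicRay γ ∧ IsKappaMorse o κ (γ '' Ici 0) }

/-- The `κ`-Morse boundary `∂_κ Y`: `κ`-Morse quasi-geodesic rays modulo `κ`-fellow
travelling. -/
def KappaBoundary (Y : Type*) [MetricSpace Y] (o : Y) (κ : ℝ → ℝ) : Type _ :=
  Quot (fun γ γ' : KappaMorseRay Y o κ => KappaClose o κ (γ.1 '' Ici 0) (γ'.1 '' Ici 0))

def kappaPt {Y : Type*} [MetricSpace Y] {o : Y} {κ : ℝ → ℝ} (γ : KappaMorseRay Y o κ) :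
    KappaBoundary Y o κ :=
  Quot.mk (fun γ γ' : KappaMorseRay Y o κ => KappaClose o κ (γ.1 '' Ici 0) (γ'.1 '' Ici 0)) γ

/-- `κ`-injectivity of a hyperbolic projection with projection map `p`: the projection of every
`κ`-Morse quasi-geodesic ray defines a boundary point, and two `κ`-Morse quasi-geodesic rays
are `κ`-close iff their projections define the same boundary point. -/
def KappaInjective {Y X : Type*} [MetricSpace Y] [MetricSpace X] (o : Y) (κ : ℝ → ℝ)
    (p : Y → X) : Prop :=
  (∀ γ : ℝ → Y, IsQuasiGeodesicRay γ → IsKappaMorse o κ (γ '' Ici 0) →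
    ∃ ξ : GromovBoundary X, DefinesBoundaryPoint (fun t => p (γ t)) 0 ξ) ∧
  (∀ γ γ' : ℝ → Y, IsQuasiGeodesicRay γ → IsKappaMorse o κ (γ '' Ici 0) →
    IsQuasiGeodesicRay γ' → IsKappaMorse o κ (γ' '' Ici 0) →
    (KappaClose o κ (γ '' Ici 0) (γ' '' Ici 0) ↔
      ∃ ξ : GromovBoundary X, DefinesBoundaryPoint (fun t => p (γ t)) 0 ξ ∧
        DefinesBoundaryPoint (fun t => p (γ' t)) 0 ξ))

/-- `f` is the boundary map `∂p` induced by `p` on the `κ`-Morse boundary. -/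
def IsInducedKappaBoundaryMap {Y X : Type*} [MetricSpace Y] [MetricSpace X] (o : Y)
    (κ : ℝ → ℝ) (p : Y → X) (f : KappaBoundary Y o κ → GromovBoundary X) : Prop :=
  ∀ γ : KappaMorseRay Y o κ, DefinesBoundaryPoint (fun t => p (γ.1 t)) 0 (f (kappaPt γ))

/-- `f` is the boundary map `∂Ψ` induced by a quasi-isometry `Ψ` on `κ`-Morse boundaries. -/
def IsInducedKappaQIMap {Y Y' : Type*} [MetricSpace Y] [MetricSpace Y'] (o : Y) (o' : Y')
    (κ : ℝ → ℝ) (Ψ : Y → Y')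
    (f : KappaBoundary Y o κ → KappaBoundary Y' o' κ) : Prop :=
  ∀ γ : KappaMorseRay Y o κ,
    ∃ h : IsQuasiGeodesicRay (fun t => Ψ (γ.1 t)) ∧
        IsKappaMorse o' κ ((fun t => Ψ (γ.1 t)) '' Ici 0),
      f (kappaPt γ) = kappaPt (⟨fun t => Ψ (γ.1 t), h⟩ : KappaMorseRay Y' o' κ)
/-! ## Coarse medians -/

/-- The median of three real numbers. -/
def realMedian (a b c : ℝ) : ℝ := max (min a b) (min (max a b) c)

/-- A coarse median with constant `C`. -/
def IsCoarseMedianWith {Y : Type*} [MetricSpace Y] (C : ℝ) (μ : Y → Y → Y → Y) : Prop :=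
  (∀ a b c : Y, μ a a b = a ∧ μ a b c = μ b a c ∧ μ a b c = μ b c a) ∧
  (∀ a b c x : Y, dist (μ (μ a x b) x c) (μ a x (μ b x c)) ≤ C) ∧
  (∀ a b c x : Y, dist (μ a b c) (μ x b c) ≤ C * dist a x + C)

/-- A coarse median. -/
def IsCoarseMedian {Y : Type*} [MetricSpace Y] (μ : Y → Y → Y → Y) : Prop :=
  ∃ C : ℝ, 0 ≤ C ∧ IsCoarseMedianWith C μ

/-- A coarse median map between coarse median spaces. -/
def IsCoarseMedianMap {Y Y' : Type*} [MetricSpace Y] [MetricSpace Y']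
    (μ : Y → Y → Y → Y) (μ' : Y' → Y' → Y' → Y') (f : Y → Y') : Prop :=
  ∃ D : ℝ, 0 ≤ D ∧ ∀ a b c : Y, dist (f (μ a b c)) (μ' (f a) (f b) (f c)) ≤ D

/-- A `G`-invariant coarse median (invariance up to uniformly bounded distance). -/
def EquivariantMedian (G : Type*) {Y : Type*} [Group G] [MetricSpace Y] [MulAction G Y]
    (μ : Y → Y → Y → Y) : Prop :=
  ∃ C : ℝ, 0 ≤ C ∧ ∀ (g : G) (a b c : Y), dist (g • μ a b c) (μ (g • a) (g • b) (g • c)) ≤ C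

/-- A `D`-median ray: a coarse median map (with constant `D`) from `[0,∞)`
with the standard median of `ℝ`. -/
def IsMedianRayWith {Y : Type*} [MetricSpace Y] (D : ℝ) (μ : Y → Y → Y → Y)
    (γ : ℝ → Y) : Prop :=
  ∀ a ∈ Ici (0 : ℝ), ∀ b ∈ Ici (0 : ℝ), ∀ c ∈ Ici (0 : ℝ),
    dist (γ (realMedian a b c)) (μ (γ a) (γ b) (γ c)) ≤ D

/-- A `μ`-median ray. -/
def IsMedianRay {Y : Type*} [MetricSpace Y] (μ : Y → Y → Y → Y) (γ : ℝ → Y) : Prop :=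
  ∃ D : ℝ, 0 ≤ D ∧ IsMedianRayWith D μ γ

/-- `∂_κ Y` has `μ`-median representatives: every point of the `κ`-Morse boundary is
represented by a `μ`-median quasi-geodesic ray. -/
def HasMedianRepresentatives {Y : Type*} [MetricSpace Y] (o : Y) (κ : ℝ → ℝ)
    (μ : Y → Y → Y → Y) : Prop :=
  ∀ γ : KappaMorseRay Y o κ, ∃ γ' : KappaMorseRay Y o κ, IsMedianRay μ γ'.1 ∧
    KappaClose o κ (γ.1 '' Ici 0) (γ'.1 '' Ici 0)

/-- `(κ, μ)`-injectivity of a hyperbolic projection with projection map `p`. -/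
def KappaMuInjective {Y X : Type*} [MetricSpace Y] [MetricSpace X] (o : Y) (κ : ℝ → ℝ)
    (μ : Y → Y → Y → Y) (p : Y → X) : Prop :=
  (∀ γ : ℝ → Y, IsQuasiGeodesicRay γ → IsKappaMorse o κ (γ '' Ici 0) → IsMedianRay μ γ →
    ∃ ξ : GromovBoundary X, DefinesBoundaryPoint (fun t => p (γ t)) 0 ξ) ∧
  (∀ γ γ' : ℝ → Y, IsQuasiGeodesicRay γ → IsKappaMorse o κ (γ '' Ici 0) → IsMedianRay μ γ →
    IsQuasiGeodesicRay γ' → IsKappaMorse o κ (γ' '' Ici 0) → IsMedianRay μ γ' →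
    (KappaClose o κ (γ '' Ici 0) (γ' '' Ici 0) ↔
      ∃ ξ : GromovBoundary X, DefinesBoundaryPoint (fun t => p (γ t)) 0 ξ ∧
        DefinesBoundaryPoint (fun t => p (γ' t)) 0 ξ))

/-- `f` is the boundary map `∂p` induced by `p` on the `κ`-Morse boundary, defined via
`μ`-median representatives. -/
def IsInducedKappaMuBoundaryMap {Y X : Type*} [MetricSpace Y] [MetricSpace X] (o : Y)
    (κ : ℝ → ℝ) (μ : Y → Y → Y → Y) (p : Y → X)
    (f : KappaBoundary Y o κ → GromovBoundary X) : Prop :=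
  ∀ γ : KappaMorseRay Y o κ, IsMedianRay μ γ.1 →
    DefinesBoundaryPoint (fun t => p (γ.1 t)) 0 (f (kappaPt γ))
/-! ## Trees and Cantor chains -/

/-- A geodesic ray from `root` in the graph `T`. -/
structure TreeRay {V : Type*} (T : SimpleGraph V) (root : V) where
  toFun : ℕ → V
  init : toFun 0 = root
  adj : ∀ n, T.Adj (toFun n) (toFun (n + 1))
  inj : Function.Injective toFun

/-- The visual topology on the space of rays from `root`, generated by the sets
`U_v` of rays passing through a vertex `v`. -/
def treeTopology {V : Type*} (T : SimpleGraph V) (root : V) :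
    TopologicalSpace (TreeRay T root) :=
  TopologicalSpace.generateFrom
    { U : Set (TreeRay T root) | ∃ v : V, U = { r | ∃ n, r.toFun n = v } }

/-- The rays from `root` that lie in the subgraph `S`. -/
def raysIn {V : Type*} {T : SimpleGraph V} (root : V) (S : T.Subgraph) :
    Set (TreeRay T root) :=
  { r | ∀ n, S.Adj (r.toFun n) (r.toFun (n + 1)) }

/-- Every vertex has countably infinite degree. -/
def CountablyBranching {V : Type*} (T : SimpleGraph V) : Prop :=
  ∀ v : V, (T.neighborSet v).Countable ∧ (T.neighborSet v).Infinite

/-- A nested family of locally finite subtrees, all of whose vertices have degree at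
least three, containing the root. -/
def SubtreeFamily {V : Type*} (T : SimpleGraph V) (root : V) (S : ℕ → T.Subgraph) : Prop :=
  (∀ i, root ∈ (S i).verts) ∧
  (∀ i, (S i).Connected) ∧
  (∀ i, ∀ v ∈ (S i).verts, ((S i).neighborSet v).Finite) ∧
  (∀ i, ∀ v ∈ (S i).verts, 3 ≤ ((S i).neighborSet v).ncard) ∧
  (∀ i, S i ≤ S (i + 1))

/-- The family is strongly entwined: each vertex of `S i` has strictly larger degree
in `S (i+1)`. -/
def StronglyEntwined {V : Type*} (T : SimpleGraph V) (S : ℕ → T.Subgraph) : Prop :=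
  ∀ i, ∀ v ∈ (S i).verts, (S i).neighborSet v ⊂ (S (i + 1)).neighborSet v

/-- The family fills `T`: every edge of `T` lies in some `S i`. -/
def FillsTree {V : Type*} (T : SimpleGraph V) (S : ℕ → T.Subgraph) : Prop :=
  ∀ u v : V, T.Adj u v → ∃ i, (S i).Adj u v

/-- The subtree spanned (convex hull from the root) by a family of rays from the root. -/
def raysHull {V : Type*} {T : SimpleGraph V} (root : V) (R : Set (TreeRay T root)) :
    T.Subgraph where
  verts := { v | ∃ r ∈ R, ∃ n, r.toFun n = v }
  Adj u v := ∃ r ∈ R, ∃ n, (r.toFun n = u ∧ r.toFun (n + 1) = v) ∨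
    (r.toFun n = v ∧ r.toFun (n + 1) = u)
  adj_sub := by
    rintro u v ⟨r, -, n, h | h⟩
    · rw [← h.1, ← h.2]; exact r.adj n
    · rw [← h.1, ← h.2]; exact (r.adj n).symm
  edge_vert := by
    rintro u v ⟨r, hr, n, h | h⟩
    · exact ⟨r, hr, n, h.1⟩
    · exact ⟨r, hr, n + 1, h.2⟩
  symm := by
    constructor
    rintro u v ⟨r, hr, n, h⟩
    exact ⟨r, hr, n, h.symm⟩

/-- A Cantor chain: a topological space homeomorphic to the union `⋃ i ∂∞ T_i ⊆ ∂∞ T∞`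
for a filling family of strongly entwined subtrees of the tree `T∞` of countably
infinite valence. -/
def IsCantorChain (Z : Type*) (τ : TopologicalSpace Z) : Prop :=
  ∃ (V : Type) (T : SimpleGraph V) (root : V) (S : ℕ → T.Subgraph),
    T.IsTree ∧ CountablyBranching T ∧ SubtreeFamily T root S ∧
    StronglyEntwined T S ∧ FillsTree T S ∧
    ∃ e : Z → TreeRay T root, Function.Injective e ∧
      range e = ⋃ i, raysIn root (S i) ∧
      τ = TopologicalSpace.induced e (treeTopology T root)

namespace QRuling

variable {X : Type*} [MetricSpace X]

/-- Anchor data along a coarse geodesic from `x` to `y`. -/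
structure AnchorData (D : ℝ) {X : Type*} [MetricSpace X] (x y : X) where
  n : ℕ
  z : ℕ → X
  z0 : z 0 = x
  zn : ∀ k, n ≤ k → z k = y
  key : ∀ k l : ℕ, dist (z k) (z l) ≤
      |dist x (z k) - dist x (z l)| + (if k = 0 ∨ n ≤ k then 0 else D)
        + (if l = 0 ∨ n ≤ l then 0 else D)
  fbound : ∀ k, dist x (z k) ≤ dist x y + D
  cover : ∀ s ∈ Icc (0:ℝ) (dist x y), ∃ k,
      (if k = 0 ∨ n ≤ k then 0 else D) + |s - dist x (z k)| ≤ 3 * D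

theorem exists_anchorData {D : ℝ} (hD : 0 < D) (hX : AdmitsQuasiRuling X D) (x y : X) :
    Nonempty (AnchorData D x y) := by
  by_cases hxy : x = y
  · subst hxy
    refine ⟨⟨0, fun _ => x, rfl, fun k _ => rfl, ?_, ?_, ?_⟩⟩
    · intro k l; simp
    · intro k; simp; positivity
    · intro s hs
      simp only [dist_self] at hs
      obtain ⟨h0, h1⟩ := hs
      refine ⟨0, ?_⟩
      have : s = 0 := le_antisymm h1 h0
      simp [this]; positivity
  · obtain ⟨a, b, γ, hab, hγa, hγb, hR⟩ := hX x y
    set d : ℝ := dist x y with hd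
    have hd0 : 0 < d := dist_pos.mpr hxy
    have hab' : a < b := by
      rcases lt_or_eq_of_le hab with h | h
      · exact h
      · exfalso; exact hxy (by rw [← hγa, ← hγb, h])
    set n : ℕ := ⌈d / D⌉₊ with hn
    have hn1 : 1 ≤ n := Nat.one_le_iff_ne_zero.mpr (by
      simp only [hn, ne_eq, Nat.ceil_eq_zero, not_le]
      positivity)
    have hnpos : (0:ℝ) < n := by exact_mod_cast Nat.lt_of_lt_of_le Nat.zero_lt_one hn1
    set q : ℝ := d / n with hq
    have hq0 : 0 < q := div_pos hd0 hnpos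
    have hqD : q ≤ D := by
      have h1 : d / D ≤ (n:ℝ) := Nat.le_ceil _
      rw [div_le_iff₀ hD] at h1
      rw [hq, div_le_iff₀ hnpos]
      linarith [mul_comm (n:ℝ) D]
    have hqn : (n:ℝ) * q = d := by rw [hq]; field_simp
    set r : ℕ → ℝ := fun k => k * q with hr
    have hr0 : ∀ k, 0 ≤ r k := fun k => by positivity
    set S : ℕ → Set ℝ := fun k => {t | t ∈ Icc a b ∧ dist x (γ t) ≤ r k} with hS
    have haS : ∀ k, a ∈ S k := fun k => ⟨⟨le_refl a, hab⟩, by rw [hγa]; simpa using hr0 k⟩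
    have hSne : ∀ k, (S k).Nonempty := fun k => ⟨a, haS k⟩
    have hSbdd : ∀ k, BddAbove (S k) := fun k =>
      BddAbove.mono (fun t ht => ht.1) bddAbove_Icc
    set T : ℕ → ℝ := fun k => sSup (S k) with hT
    have hTa : ∀ k, a ≤ T k := fun k => le_csSup (hSbdd k) (haS k)
    have hTb : ∀ k, T k ≤ b := fun k => csSup_le (hSne k) (fun t ht => ht.1.2)
    have hTmem : ∀ k, T k ∈ Icc a b := fun k => ⟨hTa k, hTb k⟩
    have hTmono : ∀ k l, k ≤ l → T k ≤ T l := by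
      intro k l hkl
      apply csSup_le_csSup (hSbdd l) (hSne k)
      intro t ht
      exact ⟨ht.1, ht.2.trans (by
        simp only [hr]
        exact mul_le_mul_of_nonneg_right (by exact_mod_cast hkl) hq0.le)⟩
    -- the key estimate at T k
    have hest : ∀ k, r k ≤ d → |dist x (γ (T k)) - r k| ≤ D := by
      intro k hrk
      obtain ⟨c, hcD, ε, hε, hloc⟩ := hR.noJump (T k) (hTmem k)
      have hup : dist x (γ (T k)) ≤ r k + c := by
        obtain ⟨t₀, ht₀S, ht₀gt⟩ := exists_lt_of_lt_csSup (hSne k)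
          (show T k - ε < T k by linarith)
        have ht₀le : t₀ ≤ T k := le_csSup (hSbdd k) ht₀S
        have hclose : dist (γ t₀) (γ (T k)) ≤ c :=
          hloc t₀ ht₀S.1 (abs_lt.mpr ⟨by linarith, by linarith⟩)
        calc dist x (γ (T k)) ≤ dist x (γ t₀) + dist (γ t₀) (γ (T k)) := dist_triangle _ _ _
          _ ≤ r k + c := add_le_add ht₀S.2 hclose
      have hlow : r k - c ≤ dist x (γ (T k)) := by
        rcases eq_or_lt_of_le (hTb k) with hTb' | hTb'
        · have : dist x (γ (T k)) = d := by rw [hTb', hγb]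
          have hc0 : 0 ≤ c := le_trans dist_nonneg (hloc (T k) (hTmem k) (by simpa using hε))
          linarith
        · set t₁ : ℝ := min b (T k + ε / 2) with ht₁
          have ht₁gt : T k < t₁ := lt_min hTb' (by linarith)
          have ht₁mem : t₁ ∈ Icc a b := ⟨le_trans (hTa k) ht₁gt.le, min_le_left _ _⟩
          have ht₁nS : t₁ ∉ S k := fun hmem => absurd (le_csSup (hSbdd k) hmem) (not_le.mpr ht₁gt)
          have ht₁far : r k < dist x (γ t₁) := by
            by_contra h
            exact ht₁nS ⟨ht₁mem, not_lt.mp h⟩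
          have hclose : dist (γ t₁) (γ (T k)) ≤ c := by
            apply hloc t₁ ht₁mem
            rw [abs_lt]
            constructor
            · linarith
            · have : t₁ ≤ T k + ε / 2 := min_le_right _ _
              linarith
          have := dist_triangle x (γ t₁) (γ (T k))
          have h2 : dist x (γ t₁) ≤ dist x (γ (T k)) + c := by
            calc dist x (γ t₁) ≤ dist x (γ (T k)) + dist (γ (T k)) (γ t₁) := dist_triangle _ _ _
              _ ≤ dist x (γ (T k)) + c := by rw [dist_comm (γ (T k))]; linarith
          linarith
      rw [abs_le]
      have hc0 : 0 ≤ c := le_trans dist_nonneg (hloc (T k) (hTmem k) (by simpa using hε))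
      exact ⟨by linarith, by linarith⟩
    set z : ℕ → X := fun k => if k = 0 then x else if n ≤ k then y else γ (T k) with hz
    have hf0 : dist x (z 0) = 0 := by simp [hz]
    have hfn : ∀ k, n ≤ k → dist x (z k) = d := by
      intro k hk
      have : z k = y := by
        simp only [hz]
        rw [if_neg (by omega), if_pos hk]
      rw [this]
    have hrled : ∀ k, k ≤ n → r k ≤ d := by
      intro k hk
      calc r k = k * q := rfl
        _ ≤ n * q := mul_le_mul_of_nonneg_right (by exact_mod_cast hk) hq0.le
        _ = d := hqn
    have hint : ∀ k, ¬(k = 0) → ¬(n ≤ k) → z k = γ (T k) := by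
      intro k h1 h2; simp only [hz]; rw [if_neg h1, if_neg h2]
    -- interior estimate
    have hintest : ∀ k, ¬(k = 0) → ¬(n ≤ k) → |dist x (z k) - r k| ≤ D := by
      intro k h1 h2
      rw [hint k h1 h2]
      exact hest k (hrled k (le_of_lt (not_le.mp h2)))
    -- ruled bound between interior anchors and later points
    have hruled2 : ∀ k l, ¬(k = 0) → ¬(n ≤ k) → T k < T l → T l ≤ b →
        dist x (γ (T k)) + dist (γ (T k)) (γ (T l)) ≤ dist x (γ (T l)) + D := by
      intro k l h1 h2 hlt hlb
      rcases eq_or_lt_of_le (hTa k) with hTa' | hTa'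
      · rw [← hTa', hγa]
        simp only [dist_self, zero_add]
        have := dist_triangle x (γ (T k)) (γ (T l))
        rw [← hTa', hγa] at *
        linarith [dist_triangle x (γ (T k)) (γ (T l)), hD.le]
      · have := hR.ruled a ⟨le_refl a, hab⟩ (T k) (hTmem k) (T l) ⟨(hTa l), hlb⟩ hTa' hlt
        rw [hγa] at this
        exact this
    have hC0 : ∀ m : ℕ, (0:ℝ) ≤ (if m = 0 ∨ n ≤ m then (0:ℝ) else D) := by
      intro m; split
      · exact le_refl 0
      · exact hD.le
    have hruled3 : ∀ k, dist (γ (T k)) y ≤ d - dist x (γ (T k)) + D := by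
      intro k
      rcases eq_or_lt_of_le (hTb k) with hTb' | hTb'
      · have hfk : γ (T k) = y := by rw [hTb', hγb]
        rw [hfk]
        simp only [dist_self]
        have h1 : dist x y = d := hd.symm
        linarith [hD.le]
      · rcases eq_or_lt_of_le (hTa k) with hTa' | hTa'
        · have hfk : γ (T k) = x := by rw [← hTa', hγa]
          rw [hfk]
          simp only [dist_self]
          have h1 : dist x y = d := hd.symm
          linarith [hD.le]
        · have := hR.ruled a ⟨le_refl a, hab⟩ (T k) (hTmem k) b ⟨hab, le_refl b⟩ hTa' hTb'
          rw [hγa, hγb] at this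
          have h1 : dist x y = d := hd.symm
          linarith
    have hkey2 : ∀ k l : ℕ, k ≤ l → dist (z k) (z l) ≤
        |dist x (z k) - dist x (z l)| + (if k = 0 ∨ n ≤ k then 0 else D)
          + (if l = 0 ∨ n ≤ l then 0 else D) := by
      intro k l hkl
      by_cases hk0 : k = 0
      · subst hk0
        have hzk : z 0 = x := by simp [hz]
        rw [hzk]
        simp only [dist_self]
        have habs : |(0:ℝ) - dist x (z l)| = dist x (z l) := by
          rw [abs_sub_comm]; simp [abs_of_nonneg dist_nonneg]
        rw [habs]
        split_ifs <;> linarith [hC0 l, hD.le]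
      · by_cases hkn : n ≤ k
        · have hzk : z k = y := by simp only [hz]; rw [if_neg hk0, if_pos hkn]
          have hzl : z l = y := by
            simp only [hz]
            rw [if_neg (by omega), if_pos (le_trans hkn hkl)]
          rw [hzk, hzl]
          simp only [dist_self]
          have := abs_nonneg (dist x y - dist x y)
          linarith [hC0 k, hC0 l, abs_nonneg (dist x (z k) - dist x (z l))]
        · -- k interior
          have hCk : (if k = 0 ∨ n ≤ k then (0:ℝ) else D) = D := by
            rw [if_neg]; push_neg; exact ⟨hk0, by omega⟩
          have hzk : z k = γ (T k) := hint k hk0 hkn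
          by_cases hln : n ≤ l
          · -- l is endpoint y
            have hzl : z l = y := by simp only [hz]; rw [if_neg (by omega), if_pos hln]
            have hCl : (if l = 0 ∨ n ≤ l then (0:ℝ) else D) = 0 := by
              rw [if_pos (Or.inr hln)]
            rw [hzk, hzl, hCk, hCl]
            have h3 := hruled3 k
            have : dist x (z l) = d := hfn l hln
            rw [hzl] at this
            rw [hzk] at *
            have habs : d - dist x (γ (T k)) ≤ |dist x (γ (T k)) - d| := by
              rw [abs_sub_comm]; exact le_abs_self _
            rw [this]
            linarith
          · -- l interior too (l ≠ 0 since k ≤ l, k ≠ 0)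
            have hl0 : ¬ (l = 0) := by omega
            have hzl : z l = γ (T l) := hint l hl0 hln
            have hCl : (if l = 0 ∨ n ≤ l then (0:ℝ) else D) = D := by
              rw [if_neg]; push_neg; exact ⟨hl0, by omega⟩
            rw [hzk, hzl, hCk, hCl]
            rcases eq_or_lt_of_le (hTmono k l hkl) with hT' | hT'
            · rw [hT']
              simp only [dist_self]
              linarith [abs_nonneg (dist x (γ (T l)) - dist x (γ (T l)))]
            · have := hruled2 k l hk0 hkn hT' (hTb l)
              have habs : dist x (γ (T l)) - dist x (γ (T k)) ≤
                  |dist x (γ (T k)) - dist x (γ (T l))| := by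
                rw [abs_sub_comm]; exact le_abs_self _
              linarith
    refine ⟨⟨n, z, by simp [hz], ?_, ?_, ?_, ?_⟩⟩
    · intro k hk
      simp only [hz]
      rw [if_neg (by omega), if_pos hk]
    · intro k l
      rcases le_total k l with h | h
      · exact hkey2 k l h
      · have := hkey2 l k h
        rw [dist_comm (z l) (z k), abs_sub_comm (dist x (z l))] at this
        linarith
    · intro k
      by_cases hk0 : k = 0
      · subst hk0; rw [hf0]; positivity
      · by_cases hkn : n ≤ k
        · rw [hfn k hkn]; linarith
        · have h1 := hintest k hk0 hkn
          have h2 := hrled k (le_of_lt (not_le.mp hkn))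
          rw [abs_le] at h1
          linarith [h1.2]
    · intro s hs
      obtain ⟨hs0, hsd⟩ := hs
      set k : ℕ := ⌈s / q⌉₊ with hk
      have hkn : k ≤ n := by
        rw [hk, Nat.ceil_le, div_le_iff₀ hq0]
        linarith [hqn]
      have hsr : s ≤ r k := by
        have := Nat.le_ceil (s / q)
        have h2 : s / q * q ≤ (k:ℝ) * q := mul_le_mul_of_nonneg_right this hq0.le
        rw [div_mul_cancel₀ _ hq0.ne'] at h2
        exact h2
      have hrs : r k ≤ s + q := by
        have h1 : (k:ℝ) < s / q + 1 := by
          have := Nat.ceil_lt_add_one (by positivity : 0 ≤ s / q)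
          exact_mod_cast this
        have h2 : (k:ℝ) * q ≤ (s / q + 1) * q := by nlinarith
        rw [add_mul, div_mul_cancel₀ _ hq0.ne', one_mul] at h2
        exact h2
      refine ⟨k, ?_⟩
      by_cases hk0 : k = 0
      · have hr00 : r k = 0 := by simp [hr, hk0]
        have hs00 : s = 0 := le_antisymm (by linarith [hsr, hr00.le, hr00.ge]) hs0
        rw [if_pos (Or.inl hk0), hk0, hs00, hf0]
        simp
        positivity
      · by_cases hknn : n ≤ k
        · have hkeq : k = n := le_antisymm hkn hknn
          have : dist x (z k) = d := hfn k hknn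
          rw [if_pos (Or.inr hknn), this]
          have hrkd : r k = d := by rw [hkeq, hr]; exact hqn
          have : |s - d| ≤ q := abs_le.mpr ⟨by linarith [hrkd ▸ hsr], by linarith [hrkd ▸ hrs, hqD]⟩
          linarith [hqD, hD.le]
        · have h1 := hintest k hk0 hknn
          have hCk : (if k = 0 ∨ n ≤ k then (0:ℝ) else D) = D := by
            rw [if_neg]; push_neg; exact ⟨hk0, by omega⟩
          rw [hCk]
          have h2 : |s - dist x (z k)| ≤ |s - r k| + |r k - dist x (z k)| := abs_sub_le _ _ _
          have h3 : |s - r k| ≤ q := abs_le.mpr ⟨by linarith, by linarith⟩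
          have h4 : |r k - dist x (z k)| ≤ D := by rw [abs_sub_comm]; exact h1
          linarith
    



/-! ### The edge space -/

variable {D : ℝ}

/-- Points: for each ordered pair `e`, a segment of length `dist e.1 e.2`. -/
abbrev EPt (X : Type*) [MetricSpace X] : Type _ := Σ e : X × X, (Icc (0:ℝ) (dist e.1 e.2) : Set ℝ)

variable (A : ∀ x y : X, AnchorData D x y)

def aN (e : X × X) : ℕ := (A e.1 e.2).n
def aZ (e : X × X) (k : ℕ) : X := (A e.1 e.2).z k
def aC (e : X × X) (k : ℕ) : ℝ := if k = 0 ∨ aN A e ≤ k then 0 else D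
def aF (e : X × X) (k : ℕ) : ℝ := dist e.1 (aZ A e k)

lemma aZ0 (e : X × X) : aZ A e 0 = e.1 := (A e.1 e.2).z0
lemma aZtop (e : X × X) {k : ℕ} (hk : aN A e ≤ k) : aZ A e k = e.2 := (A e.1 e.2).zn k hk
lemma aF0 (e : X × X) : aF A e 0 = 0 := by rw [aF, aZ0]; simp
lemma aFtop (e : X × X) {k : ℕ} (hk : aN A e ≤ k) : aF A e k = dist e.1 e.2 := by
  rw [aF, aZtop A e hk]
lemma aC_nonneg (hD : 0 < D) (e : X × X) (k : ℕ) : 0 ≤ aC A e k := by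
  rw [aC]; split
  · exact le_refl 0
  · exact hD.le
lemma aC_le (hD : 0 < D) (e : X × X) (k : ℕ) : aC A e k ≤ D := by
  rw [aC]; split
  · exact hD.le
  · exact le_refl D
lemma aC0 (e : X × X) : aC A e 0 = 0 := by rw [aC, if_pos (Or.inl rfl)]
lemma aCtop (e : X × X) {k : ℕ} (hk : aN A e ≤ k) : aC A e k = 0 := by
  rw [aC, if_pos (Or.inr hk)]
lemma akey (e : X × X) (k l : ℕ) :
    dist (aZ A e k) (aZ A e l) ≤ |aF A e k - aF A e l| + aC A e k + aC A e l :=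
  (A e.1 e.2).key k l
lemma arev (e : X × X) (k l : ℕ) :
    |aF A e k - aF A e l| ≤ dist (aZ A e k) (aZ A e l) := by
  rw [aF, aF, dist_comm e.1 (aZ A e k), dist_comm e.1 (aZ A e l)]
  exact abs_dist_sub_le _ _ _
lemma aFbound (e : X × X) (k : ℕ) : aF A e k ≤ dist e.1 e.2 + D := (A e.1 e.2).fbound k
lemma acover (e : X × X) (s : ℝ) (hs : s ∈ Icc (0:ℝ) (dist e.1 e.2)) :
    ∃ k, aC A e k + |s - aF A e k| ≤ 3 * D := (A e.1 e.2).cover s hs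
lemma aZmin (e : X × X) (k : ℕ) : aZ A e (min k (aN A e)) = aZ A e k := by
  rcases le_total k (aN A e) with h | h
  · rw [min_eq_left h]
  · rw [min_eq_right h, aZtop A e h, aZtop A e (le_refl _)]
lemma aCmin (e : X × X) (k : ℕ) : aC A e (min k (aN A e)) = aC A e k := by
  rcases le_total k (aN A e) with h | h
  · rw [min_eq_left h]
  · rw [min_eq_right h, aCtop A e h, aCtop A e (le_refl _)]
lemma aFmin (e : X × X) (k : ℕ) : aF A e (min k (aN A e)) = aF A e k := by
  rw [aF, aF, aZmin]

/-- port cost of an edge point -/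
def pcost (p : EPt X) (k : ℕ) : ℝ := aC A p.1 k + |(p.2 : ℝ) - aF A p.1 k|

lemma pcost_nonneg (hD : 0 < D) (p : EPt X) (k : ℕ) : 0 ≤ pcost A p k :=
  add_nonneg (aC_nonneg A hD _ _) (abs_nonneg _)

/-- key inequality: travelling between two ports of the same point. -/
lemma pkey (p : EPt X) (k l : ℕ) :
    dist (aZ A p.1 k) (aZ A p.1 l) ≤ pcost A p k + pcost A p l := by
  have h1 := akey A p.1 k l
  have h2 : |aF A p.1 k - aF A p.1 l| ≤ |(p.2:ℝ) - aF A p.1 k| + |(p.2:ℝ) - aF A p.1 l| := by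
    rw [abs_sub_comm ((p.2:ℝ)) (aF A p.1 k)]
    exact abs_sub_le _ _ _
  rw [pcost, pcost]
  linarith

def pPorts (p : EPt X) : Finset (ℕ) := Finset.range (aN A p.1 + 1)

lemma pPorts_nonempty (p : EPt X) : (pPorts A p).Nonempty :=
  Finset.nonempty_range_iff.mpr (Nat.succ_ne_zero _)

/-- route distance through anchors -/
def rR (p q : EPt X) : ℝ :=
  ((pPorts A p) ×ˢ (pPorts A q)).inf'
    ((pPorts_nonempty A p).product (pPorts_nonempty A q))
    (fun kl => pcost A p kl.1 + dist (aZ A p.1 kl.1) (aZ A q.1 kl.2) + pcost A q kl.2)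

lemma pcost_min (p : EPt X) (k : ℕ) : pcost A p (min k (aN A p.1)) = pcost A p k := by
  rw [pcost, pcost, aCmin, aFmin]

lemma rR_le (p q : EPt X) {k l : ℕ} (hk : k ≤ aN A p.1) (hl : l ≤ aN A q.1) :
    rR A p q ≤ pcost A p k + dist (aZ A p.1 k) (aZ A q.1 l) + pcost A q l := by
  rw [rR]
  exact Finset.inf'_le (b := (k, l)) _
    (by simp only [Finset.mem_product, pPorts, Finset.mem_range]; omega)

lemma rR_le' (p q : EPt X) (k l : ℕ) :
    rR A p q ≤ pcost A p k + dist (aZ A p.1 k) (aZ A q.1 l) + pcost A q l := by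
  have h := rR_le A p q (min_le_right k (aN A p.1)) (min_le_right l (aN A q.1))
  rwa [pcost_min, pcost_min, aZmin, aZmin] at h

lemma rR_exists (p q : EPt X) : ∃ k l : ℕ,
    rR A p q = pcost A p k + dist (aZ A p.1 k) (aZ A q.1 l) + pcost A q l := by
  obtain ⟨kl, _, h⟩ := Finset.exists_mem_eq_inf'
    (s := (pPorts A p) ×ˢ (pPorts A q))
    ((pPorts_nonempty A p).product (pPorts_nonempty A q))
    (fun kl => pcost A p kl.1 + dist (aZ A p.1 kl.1) (aZ A q.1 kl.2) + pcost A q kl.2)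
  exact ⟨kl.1, kl.2, by rw [rR]; exact h⟩

lemma rR_nonneg (hD : 0 < D) (p q : EPt X) : 0 ≤ rR A p q := by
  obtain ⟨k, l, h⟩ := rR_exists A p q
  rw [h]
  have := pcost_nonneg A hD p k
  have := pcost_nonneg A hD q l
  have := dist_nonneg (x := aZ A p.1 k) (y := aZ A q.1 l)
  linarith

lemma rR_comm (p q : EPt X) : rR A p q = rR A q p := by
  apply le_antisymm
  · obtain ⟨k, l, h⟩ := rR_exists A q p
    rw [h]
    have := rR_le' A p q l k
    rw [dist_comm] at this
    linarith
  · obtain ⟨k, l, h⟩ := rR_exists A p q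
    rw [h]
    have := rR_le' A q p l k
    rw [dist_comm] at this
    linarith

lemma rR_triangle (hD : 0 < D) (p q r : EPt X) : rR A p r ≤ rR A p q + rR A q r := by
  obtain ⟨k, l, h1⟩ := rR_exists A p q
  obtain ⟨l', m, h2⟩ := rR_exists A q r
  have hmid := pkey A q l l'
  have h3 := rR_le' A p r k m
  have h4 : dist (aZ A p.1 k) (aZ A r.1 m) ≤
      dist (aZ A p.1 k) (aZ A q.1 l) + dist (aZ A q.1 l) (aZ A q.1 l')
        + dist (aZ A q.1 l') (aZ A r.1 m) := dist_triangle4 _ _ _ _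
  rw [h1, h2]
  linarith

lemma rR_lipschitz (e : X × X) (s s' : Icc (0:ℝ) (dist e.1 e.2)) (r : EPt X) :
    rR A ⟨e, s⟩ r ≤ |(s:ℝ) - (s':ℝ)| + rR A ⟨e, s'⟩ r := by
  obtain ⟨k, l, h⟩ := rR_exists A ⟨e, s'⟩ r
  have h2 := rR_le' A ⟨e, s⟩ r k l
  have h3 : pcost A ⟨e, s⟩ k ≤ |(s:ℝ) - (s':ℝ)| + pcost A ⟨e, s'⟩ k := by
    rw [pcost, pcost]
    have := abs_sub_le (s:ℝ) (s':ℝ) (aF A e k)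
    linarith
  rw [h]
  simp only at h2 h3 ⊢
  linarith

lemma rR_ge_abs (hD : 0 < D) (e : X × X) (s s' : Icc (0:ℝ) (dist e.1 e.2)) :
    |(s:ℝ) - (s':ℝ)| ≤ rR A ⟨e, s⟩ ⟨e, s'⟩ := by
  obtain ⟨k, l, h⟩ := rR_exists A ⟨e, s⟩ ⟨e, s'⟩
  rw [h]
  have h1 := arev A e k l
  have h2 : |(s:ℝ) - (s':ℝ)| ≤ |(s:ℝ) - aF A e k| + |aF A e k - aF A e l| + |aF A e l - (s':ℝ)| := by
    calc |(s:ℝ) - (s':ℝ)| ≤ |(s:ℝ) - aF A e k| + |aF A e k - (s':ℝ)| := abs_sub_le _ _ _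
      _ ≤ |(s:ℝ) - aF A e k| + (|aF A e k - aF A e l| + |aF A e l - (s':ℝ)|) := by
          have := abs_sub_le (aF A e k) (aF A e l) (s':ℝ)
          linarith
      _ = _ := by ring
  have h3 : |aF A e l - (s':ℝ)| = |(s':ℝ) - aF A e l| := abs_sub_comm _ _
  have hc1 := aC_nonneg A hD e k
  have hc2 := aC_nonneg A hD e l
  rw [pcost, pcost]
  simp only at *
  linarith

open Classical in
def r1 (p q : EPt X) : ℝ :=
  if p.1 = q.1 then min |(p.2:ℝ) - (q.2:ℝ)| (rR A p q) else rR A p q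

lemma r1_le_rR (p q : EPt X) : r1 A p q ≤ rR A p q := by
  simp only [r1]; split
  · exact min_le_right _ _
  · exact le_refl _

lemma r1_nonneg (hD : 0 < D) (p q : EPt X) : 0 ≤ r1 A p q := by
  simp only [r1]; split
  · exact le_min (abs_nonneg _) (rR_nonneg A hD p q)
  · exact rR_nonneg A hD p q

lemma r1_self (hD : 0 < D) (p : EPt X) : r1 A p p = 0 := by
  simp only [r1]
  have h : |(p.2:ℝ) - (p.2:ℝ)| = 0 := by simp
  rw [if_pos trivial, h]
  exact min_eq_left (rR_nonneg A hD p p)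

lemma r1_comm (p q : EPt X) : r1 A p q = r1 A q p := by
  simp only [r1]
  by_cases h : p.1 = q.1
  · rw [if_pos h, if_pos h.symm, rR_comm, abs_sub_comm]
  · rw [if_neg h, if_neg (fun h' => h h'.symm), rR_comm]

lemma r1_edge (hD : 0 < D) (e : X × X) (s s' : Icc (0:ℝ) (dist e.1 e.2)) :
    r1 A ⟨e, s⟩ ⟨e, s'⟩ = |(s:ℝ) - (s':ℝ)| := by
  simp only [r1]
  rw [if_pos trivial]
  exact min_eq_left (rR_ge_abs A hD e s s')

lemma r1_triangle (hD : 0 < D) (p q r : EPt X) : r1 A p r ≤ r1 A p q + r1 A q r := by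
  obtain ⟨ep, sp⟩ := p
  obtain ⟨eq', sq⟩ := q
  obtain ⟨er, sr⟩ := r
  have hR := rR_triangle A hD ⟨ep, sp⟩ ⟨eq', sq⟩ ⟨er, sr⟩
  by_cases h1 : ep = eq'
  · subst h1
    by_cases h2 : ep = er
    · subst h2
      rw [r1_edge A hD, r1_edge A hD, r1_edge A hD]
      exact abs_sub_le _ _ _
    · have hLip := rR_lipschitz A ep sp sq ⟨er, sr⟩
      simp only [r1]
      rw [if_neg h2, if_pos trivial, if_neg h2]
      rcases min_cases |(sp:ℝ) - (sq:ℝ)| (rR A ⟨ep, sp⟩ ⟨ep, sq⟩) with ⟨hm, _⟩ | ⟨hm, _⟩ <;>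
        rw [hm] <;> linarith
  · by_cases h2 : eq' = er
    · subst h2
      have hLip := rR_lipschitz A eq' sr sq ⟨ep, sp⟩
      rw [rR_comm A ⟨eq', sr⟩ ⟨ep, sp⟩, rR_comm A ⟨eq', sq⟩ ⟨ep, sp⟩] at hLip
      have h3 : |(sr:ℝ) - (sq:ℝ)| = |(sq:ℝ) - (sr:ℝ)| := abs_sub_comm _ _
      simp only [r1]
      rw [if_neg h1, if_neg h1, if_pos trivial]
      rcases min_cases |(sq:ℝ) - (sr:ℝ)| (rR A ⟨eq', sq⟩ ⟨eq', sr⟩) with ⟨hm, _⟩ | ⟨hm, _⟩ <;>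
        rw [hm] <;> linarith
    · simp only [r1]
      rw [if_neg h1, if_neg h2]
      split
      · exact le_trans (min_le_right _ _) hR
      · exact hR

/-- the embedding of `X` -/
def iM (x : X) : EPt X := ⟨(x, x), ⟨0, le_refl 0, dist_nonneg⟩⟩

lemma pcost_iM (hD : 0 < D) (x : X) (k : ℕ) :
    dist x (aZ A (x, x) k) ≤ pcost A (iM x) k := by
  rw [pcost]
  have h1 : |(0:ℝ) - aF A (x,x) k| = aF A (x,x) k := by
    rw [abs_sub_comm]
    simp [aF, abs_of_nonneg dist_nonneg]
  have : ((iM x : EPt X).2 : ℝ) = 0 := rfl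
  rw [iM] at *
  simp only
  rw [h1]
  have := aC_nonneg A hD (x, x) k
  rw [aF]
  simp only
  linarith

lemma r1_iM (hD : 0 < D) (x y : X) : r1 A (iM x) (iM y) = dist x y := by
  by_cases hxy : x = y
  · subst hxy; rw [r1_self A hD]; simp
  · apply le_antisymm
    · have h := rR_le' A (iM x) (iM y) 0 0
      have h1 : pcost A (iM x) 0 = 0 := by
        rw [pcost, aC0]
        simp [iM, aF0]
      have h2 : pcost A (iM y) 0 = 0 := by
        rw [pcost, aC0]
        simp [iM, aF0]
      have h3 : aZ A ((iM x : EPt X).1) 0 = x := aZ0 A _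
      have h4 : aZ A ((iM y : EPt X).1) 0 = y := aZ0 A _
      rw [h1, h2, h3, h4] at h
      simpa using le_trans (r1_le_rR A _ _) h
    · obtain ⟨k, l, h⟩ := rR_exists A (iM x) (iM y)
      have hx := pcost_iM A hD x k
      have hy := pcost_iM A hD y l
      have htri : dist x y ≤ dist x (aZ A (x,x) k) + dist (aZ A (x,x) k) (aZ A (y,y) l)
          + dist y (aZ A (y,y) l) := by
        have := dist_triangle4 x (aZ A (x,x) k) (aZ A (y,y) l) y
        rw [dist_comm (aZ A (y,y) l) y] at this
        linarith
      have hne : (iM x : EPt X).1 ≠ (iM y : EPt X).1 := by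
        simp only [iM, ne_eq, Prod.mk.injEq]
        exact fun h => hxy h.1
      have hxx : (iM x : EPt X).1 = (x, x) := rfl
      have hyy : (iM y : EPt X).1 = (y, y) := rfl
      rw [hxx, hyy] at h
      simp only [r1]
      rw [if_neg hne, h]
      exact le_trans htri (by linarith)

lemma cobound_M (hD : 0 < D) (p : EPt X) : ∃ x : X, r1 A p (iM x) ≤ 3 * D := by
  obtain ⟨e, s⟩ := p
  obtain ⟨k, hk⟩ := acover A e s s.2
  refine ⟨aZ A e k, ?_⟩
  have h := rR_le' A ⟨e, s⟩ (iM (aZ A e k)) k 0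
  have h1 : pcost A (iM (aZ A e k)) 0 = 0 := by
    rw [pcost, aC0]
    simp [iM, aF0]
  have h2 : aZ A ((iM (aZ A e k) : EPt X).1) 0 = aZ A e k := aZ0 A _
  rw [h1, h2] at h
  simp only [dist_self] at h
  have h3 : pcost A ⟨e, s⟩ k ≤ 3 * D := hk
  exact le_trans (r1_le_rR A _ _) (by linarith)

/-! ### Connectors and the full space -/

/-- position on the edge `ek.1` where the connector with index `ek.2` is attached -/
def cPos (ek : (X × X) × ℕ) : ℝ :=
  min (aF A ek.1 (min ek.2 (aN A ek.1))) (dist ek.1.1 ek.1.2)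

lemma cPos_mem (ek : (X × X) × ℕ) : cPos A ek ∈ Icc (0:ℝ) (dist ek.1.1 ek.1.2) :=
  ⟨le_min (by rw [aF]; exact dist_nonneg) dist_nonneg, min_le_right _ _⟩

def cU (ek : (X × X) × ℕ) : EPt X := ⟨ek.1, ⟨cPos A ek, cPos_mem A ek⟩⟩
def cW (ek : (X × X) × ℕ) : EPt X := iM (aZ A ek.1 (min ek.2 (aN A ek.1)))
def cV (ek : (X × X) × ℕ) : ℝ := r1 A (cU A ek) (cW A ek)

lemma cV_nonneg (hD : 0 < D) (ek : (X × X) × ℕ) : 0 ≤ cV A ek :=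
  r1_nonneg A hD _ _

/-- the connector length is at most the port cost at its anchor. -/
lemma cV_le (hD : 0 < D) (ek : (X × X) × ℕ) :
    cV A ek ≤ aC A ek.1 (min ek.2 (aN A ek.1)) + |cPos A ek - aF A ek.1 (min ek.2 (aN A ek.1))| := by
  set k := min ek.2 (aN A ek.1) with hk
  have h := rR_le A (cU A ek) (iM (aZ A ek.1 k)) (k := k) (l := 0)
    (by rw [hk]; exact min_le_right _ _) (by omega)
  have h1 : pcost A (iM (aZ A ek.1 k)) 0 = 0 := by
    rw [pcost, aC0]
    simp [iM, aF0]
  have h2 : aZ A ((iM (aZ A ek.1 k) : EPt X).1) 0 = aZ A ek.1 k := aZ0 A _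
  rw [h1, h2] at h
  have h2b : aZ A ((cU A ek : EPt X).1) k = aZ A ek.1 k := rfl
  rw [h2b] at h
  simp only [dist_self] at h
  have h3 : pcost A (cU A ek) k = aC A ek.1 k + |cPos A ek - aF A ek.1 k| := rfl
  rw [h3] at h
  have h4 : cV A ek = r1 A (cU A ek) (cW A ek) := rfl
  have h5 : cW A ek = iM (aZ A ek.1 k) := by rw [cW, hk]
  rw [h4, h5]
  exact le_trans (r1_le_rR A _ _) (by linarith)

lemma cV_le_2D (hD : 0 < D) (ek : (X × X) × ℕ) : cV A ek ≤ 2 * D := by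
  have h := cV_le A hD ek
  set k := min ek.2 (aN A ek.1) with hk
  have h1 : |cPos A ek - aF A ek.1 k| ≤ D := by
    rw [cPos, ← hk]
    rcases le_total (aF A ek.1 k) (dist ek.1.1 ek.1.2) with hle | hle
    · rw [min_eq_left hle]; simp [hD.le]
    · rw [min_eq_right hle, abs_sub_comm]
      rw [abs_of_nonneg (by linarith)]
      have := aFbound A ek.1 k
      linarith
  have := aC_le A hD ek.1 k
  linarith

/-- collinearity: walking to the clamped position then to the true `aF` value -/
lemma clamp_collinear {s f d : ℝ} (hs0 : 0 ≤ s) (hsd : s ≤ d) (hf : 0 ≤ f) :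
    |s - min f d| + |min f d - f| = |s - f| := by
  rcases le_total f d with h | h
  · rw [min_eq_left h]; simp
  · rw [min_eq_right h]
    rw [abs_of_nonpos (by linarith), abs_of_nonpos (by linarith), abs_of_nonpos (by linarith)]
    ring

/-- realization inequality: the path through the connector is no longer than the route. -/
lemma path_le_route (hD : 0 < D) (e : X × X) (s : Icc (0:ℝ) (dist e.1 e.2)) {k : ℕ}
    (hk : k ≤ aN A e) :
    |(s:ℝ) - cPos A (e, k)| + cV A (e, k) ≤ pcost A ⟨e, s⟩ k := by
  have hmin : min (e, k).2 (aN A (e, k).1) = k := min_eq_left hk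
  have h1 := cV_le A hD (e, k)
  rw [hmin] at h1
  have h2 := clamp_collinear (s := (s:ℝ)) (f := aF A e k) (d := dist e.1 e.2)
    s.2.1 s.2.2 (by rw [aF]; exact dist_nonneg)
  have h3 : cPos A (e, k) = min (aF A e k) (dist e.1 e.2) := by rw [cPos, hmin]
  have h4 : |(s:ℝ) - cPos A (e,k)| + |cPos A (e,k) - aF A e k| = |(s:ℝ) - aF A e k| := by
    rw [h3]; exact h2
  rw [pcost]
  simp only at *
  linarith

/-- the full point set: edge points plus connector points -/
def CPt : Type _ := Σ ek : (X × X) × ℕ, (Icc (0:ℝ) (cV A ek) : Set ℝ)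

abbrev PPt : Type _ := EPt X ⊕ CPt A

/-- the two ports of a point -/
def pt2 : PPt A → Bool → ℝ × EPt X
  | .inl m, _ => (0, m)
  | .inr c, true => ((c.2 : ℝ), cU A c.1)
  | .inr c, false => (cV A c.1 - (c.2 : ℝ), cW A c.1)

lemma pt2_nonneg (p : PPt A) (b : Bool) : 0 ≤ (pt2 A p b).1 := by
  match p, b with
  | .inl m, _ => exact le_refl 0
  | .inr c, true => exact c.2.2.1
  | .inr c, false => simp only [pt2]; linarith [c.2.2.2]

/-- entering and leaving a point through its two ports -/
lemma pt2_key (hD : 0 < D) (p : PPt A) (b b' : Bool) :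
    r1 A (pt2 A p b).2 (pt2 A p b').2 ≤ (pt2 A p b).1 + (pt2 A p b').1 := by
  match p, b, b' with
  | .inl m, _, _ => simp only [pt2]; rw [r1_self A hD]; norm_num
  | .inr c, true, true => simp only [pt2]; rw [r1_self A hD]; linarith [c.2.2.1]
  | .inr c, false, false => simp only [pt2]; rw [r1_self A hD]; linarith [c.2.2.2]
  | .inr c, true, false =>
      simp only [pt2]
      have : r1 A (cU A c.1) (cW A c.1) = cV A c.1 := rfl
      rw [this]; linarith
  | .inr c, false, true =>
      simp only [pt2]
      rw [r1_comm]
      have : r1 A (cU A c.1) (cW A c.1) = cV A c.1 := rfl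
      rw [this]; linarith

def TT (p q : PPt A) (b b' : Bool) : ℝ :=
  (pt2 A p b).1 + r1 A (pt2 A p b).2 (pt2 A q b').2 + (pt2 A q b').1

def cross (p q : PPt A) : ℝ :=
  min (min (TT A p q true true) (TT A p q true false))
    (min (TT A p q false true) (TT A p q false false))

lemma cross_le (p q : PPt A) (b b' : Bool) : cross A p q ≤ TT A p q b b' := by
  match b, b' with
  | true, true => exact le_trans (min_le_left _ _) (min_le_left _ _)
  | true, false => exact le_trans (min_le_left _ _) (min_le_right _ _)
  | false, true => exact le_trans (min_le_right _ _) (min_le_left _ _)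
  | false, false => exact le_trans (min_le_right _ _) (min_le_right _ _)

lemma cross_cases (p q : PPt A) : ∃ b b', cross A p q = TT A p q b b' := by
  rw [cross]
  rcases min_cases (min (TT A p q true true) (TT A p q true false))
      (min (TT A p q false true) (TT A p q false false)) with ⟨h, _⟩ | ⟨h, _⟩ <;> rw [h]
  · rcases min_cases (TT A p q true true) (TT A p q true false) with ⟨h', _⟩ | ⟨h', _⟩ <;>
      rw [h'] <;> exact ⟨_, _, rfl⟩
  · rcases min_cases (TT A p q false true) (TT A p q false false) with ⟨h', _⟩ | ⟨h', _⟩ <;>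
      rw [h'] <;> exact ⟨_, _, rfl⟩

lemma TT_nonneg (hD : 0 < D) (p q : PPt A) (b b' : Bool) : 0 ≤ TT A p q b b' := by
  rw [TT]
  have := pt2_nonneg A p b
  have := pt2_nonneg A q b'
  have := r1_nonneg A hD (pt2 A p b).2 (pt2 A q b').2
  linarith

lemma cross_nonneg (hD : 0 < D) (p q : PPt A) : 0 ≤ cross A p q := by
  obtain ⟨b, b', h⟩ := cross_cases A p q
  rw [h]; exact TT_nonneg A hD p q b b'

lemma cross_comm (p q : PPt A) : cross A p q = cross A q p := by
  have hTT : ∀ b b', TT A p q b b' = TT A q p b' b := by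
    intro b b'; rw [TT, TT, r1_comm]; ring
  apply le_antisymm
  · obtain ⟨b, b', h⟩ := cross_cases A q p
    rw [h, ← hTT b' b]
    exact cross_le A p q b' b
  · obtain ⟨b, b', h⟩ := cross_cases A p q
    rw [h, hTT b b']
    exact cross_le A q p b' b

lemma cross_triangle (hD : 0 < D) (p q r : PPt A) :
    cross A p r ≤ cross A p q + cross A q r := by
  obtain ⟨b1, b2, h1⟩ := cross_cases A p q
  obtain ⟨b3, b4, h2⟩ := cross_cases A q r
  have hK := pt2_key A hD q b2 b3
  have ht1 := r1_triangle A hD (pt2 A p b1).2 (pt2 A q b2).2 (pt2 A r b4).2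
  have ht2 := r1_triangle A hD (pt2 A q b2).2 (pt2 A q b3).2 (pt2 A r b4).2
  have h3 := cross_le A p r b1 b4
  rw [h1, h2, TT, TT]
  rw [TT] at h3
  linarith

open Classical in
/-- direct (same-piece) distance -/
def sP : PPt A → PPt A → ℝ
  | .inl m, .inl m' =>
      if m.1 = m'.1 then |(m.2:ℝ) - (m'.2:ℝ)| else cross A (.inl m) (.inl m')
  | .inr c, .inr c' =>
      if c.1 = c'.1 then |(c.2:ℝ) - (c'.2:ℝ)| else cross A (.inr c) (.inr c')
  | p, q => cross A p q

def r2 (p q : PPt A) : ℝ := min (sP A p q) (cross A p q)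

lemma r2_le_cross (p q : PPt A) : r2 A p q ≤ cross A p q := min_le_right _ _
lemma r2_le_sP (p q : PPt A) : r2 A p q ≤ sP A p q := min_le_left _ _

lemma sP_mixed₁ (m : EPt X) (c : CPt A) : sP A (.inl m) (.inr c) = cross A (.inl m) (.inr c) := rfl
lemma sP_mixed₂ (c : CPt A) (m : EPt X) : sP A (.inr c) (.inl m) = cross A (.inr c) (.inl m) := rfl

lemma sP_nonneg (hD : 0 < D) (p q : PPt A) : 0 ≤ sP A p q := by
  match p, q with
  | .inl m, .inl m' =>
      simp only [sP]; split
      · exact abs_nonneg _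
      · exact cross_nonneg A hD _ _
  | .inr c, .inr c' =>
      simp only [sP]; split
      · exact abs_nonneg _
      · exact cross_nonneg A hD _ _
  | .inl m, .inr c' => exact cross_nonneg A hD _ _
  | .inr c, .inl m' => exact cross_nonneg A hD _ _

lemma sP_comm (p q : PPt A) : sP A p q = sP A q p := by
  match p, q with
  | .inl m, .inl m' =>
      simp only [sP]
      by_cases h : m.1 = m'.1
      · rw [if_pos h, if_pos h.symm, abs_sub_comm]
      · rw [if_neg h, if_neg (fun h' => h h'.symm), cross_comm]
  | .inr c, .inr c' =>
      simp only [sP]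
      by_cases h : c.1 = c'.1
      · rw [if_pos h, if_pos h.symm, abs_sub_comm]
      · rw [if_neg h, if_neg (fun h' => h h'.symm), cross_comm]
  | .inl m, .inr c' => rw [sP_mixed₁, sP_mixed₂, cross_comm]
  | .inr c, .inl m' => rw [sP_mixed₂, sP_mixed₁, cross_comm]

lemma r2_nonneg (hD : 0 < D) (p q : PPt A) : 0 ≤ r2 A p q :=
  le_min (sP_nonneg A hD p q) (cross_nonneg A hD p q)

lemma r2_comm (p q : PPt A) : r2 A p q = r2 A q p := by
  rw [r2, r2, sP_comm, cross_comm]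

lemma r2_self (hD : 0 < D) (p : PPt A) : r2 A p p = 0 := by
  have h : sP A p p = 0 := by
    match p with
    | .inl m => simp only [sP]; rw [if_pos trivial]; simp
    | .inr c => simp only [sP]; rw [if_pos trivial]; simp
  rw [r2, h]
  exact min_eq_left (cross_nonneg A hD p p)

lemma cross_lip (hD : 0 < D) (p q r : PPt A) :
    cross A p r ≤ sP A p q + cross A q r := by
  match p, q with
  | .inl m, .inl m' =>
      by_cases h : m.1 = m'.1
      · obtain ⟨e, s⟩ := m
        obtain ⟨e', s'⟩ := m'
        have h' : e = e' := h
        subst h'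
        simp only [sP]
        rw [if_pos trivial]
        obtain ⟨b, b', hq⟩ := cross_cases A (.inl ⟨e, s'⟩) r
        have hc := cross_le A (.inl ⟨e, s⟩) r b b'
        have h1 := r1_triangle A hD ⟨e, s⟩ ⟨e, s'⟩ (pt2 A r b').2
        have h2 := r1_edge A hD e s s'
        rw [hq, TT]
        rw [TT] at hc
        simp only [pt2] at *
        linarith
      · simp only [sP]
        rw [if_neg h]
        exact cross_triangle A hD _ _ r
  | .inr c, .inr c' =>
      by_cases h : c.1 = c'.1
      · obtain ⟨ek, θ⟩ := c
        obtain ⟨ek', θ'⟩ := c'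
        have h' : ek = ek' := h
        subst h'
        simp only [sP]
        rw [if_pos trivial]
        obtain ⟨b, b', hq⟩ := cross_cases A (.inr ⟨ek, θ'⟩) r
        have hc := cross_le A (.inr ⟨ek, θ⟩) r b b'
        rw [hq, TT]
        rw [TT] at hc
        match b with
        | true =>
            simp only [pt2] at *
            linarith [le_abs_self ((θ:ℝ) - (θ':ℝ))]
        | false =>
            simp only [pt2] at *
            linarith [neg_abs_le ((θ:ℝ) - (θ':ℝ))]
      · simp only [sP]
        rw [if_neg h]
        exact cross_triangle A hD _ _ r
  | .inl m, .inr c' =>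
      rw [sP_mixed₁]
      exact cross_triangle A hD _ _ r
  | .inr c, .inl m' =>
      rw [sP_mixed₂]
      exact cross_triangle A hD _ _ r

lemma cross_lip' (hD : 0 < D) (p q r : PPt A) :
    cross A p r ≤ cross A p q + sP A q r := by
  have h := cross_lip A hD r q p
  rw [sP_comm, cross_comm A q p] at h
  rw [cross_comm A p r, cross_comm A p q]
  have hc : cross A q p = cross A p q := cross_comm A q p
  linarith

lemma r2_triangle (hD : 0 < D) (p q r : PPt A) : r2 A p r ≤ r2 A p q + r2 A q r := by
  have base1 : r2 A p r ≤ cross A p q + sP A q r :=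
    le_trans (r2_le_cross A p r) (cross_lip' A hD p q r)
  have base2 : r2 A p r ≤ sP A p q + cross A q r :=
    le_trans (r2_le_cross A p r) (cross_lip A hD p q r)
  have base3 : r2 A p r ≤ cross A p q + cross A q r :=
    le_trans (r2_le_cross A p r) (cross_triangle A hD p q r)
  have base0 : r2 A p r ≤ sP A p q + sP A q r := by
    match p, q, r with
    | .inl m, .inl m', .inl m'' =>
        by_cases hpq : m.1 = m'.1
        · by_cases hqr : m'.1 = m''.1
          · have hpr : m.1 = m''.1 := hpq.trans hqr
            have h1 : sP A (.inl m) (.inl m'') = |(m.2:ℝ) - (m''.2:ℝ)| := by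
              simp only [sP]; rw [if_pos hpr]
            have h2 : sP A (.inl m) (.inl m') = |(m.2:ℝ) - (m'.2:ℝ)| := by
              simp only [sP]; rw [if_pos hpq]
            have h3 : sP A (.inl m') (.inl m'') = |(m'.2:ℝ) - (m''.2:ℝ)| := by
              simp only [sP]; rw [if_pos hqr]
            rw [h2, h3]
            calc r2 A (.inl m) (.inl m'') ≤ sP A (.inl m) (.inl m'') := r2_le_sP A _ _
              _ = |(m.2:ℝ) - (m''.2:ℝ)| := h1
              _ ≤ _ := abs_sub_le _ _ _
          · have h3 : sP A (.inl m') (.inl m'') = cross A (.inl m') (.inl m'') := by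
              simp only [sP]; rw [if_neg hqr]
            rw [h3]; exact base2
        · have h2 : sP A (.inl m) (.inl m') = cross A (.inl m) (.inl m') := by
            simp only [sP]; rw [if_neg hpq]
          rw [h2]; exact base1
    | .inr c, .inr c', .inr c'' =>
        by_cases hpq : c.1 = c'.1
        · by_cases hqr : c'.1 = c''.1
          · have hpr : c.1 = c''.1 := hpq.trans hqr
            have h1 : sP A (.inr c) (.inr c'') = |(c.2:ℝ) - (c''.2:ℝ)| := by
              simp only [sP]; rw [if_pos hpr]
            have h2 : sP A (.inr c) (.inr c') = |(c.2:ℝ) - (c'.2:ℝ)| := by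
              simp only [sP]; rw [if_pos hpq]
            have h3 : sP A (.inr c') (.inr c'') = |(c'.2:ℝ) - (c''.2:ℝ)| := by
              simp only [sP]; rw [if_pos hqr]
            rw [h2, h3]
            calc r2 A (.inr c) (.inr c'') ≤ sP A (.inr c) (.inr c'') := r2_le_sP A _ _
              _ = |(c.2:ℝ) - (c''.2:ℝ)| := h1
              _ ≤ _ := abs_sub_le _ _ _
          · have h3 : sP A (.inr c') (.inr c'') = cross A (.inr c') (.inr c'') := by
              simp only [sP]; rw [if_neg hqr]
            rw [h3]; exact base2
        · have h2 : sP A (.inr c) (.inr c') = cross A (.inr c) (.inr c') := by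
            simp only [sP]; rw [if_neg hpq]
          rw [h2]; exact base1
    | .inl m, .inl m', .inr c'' => rw [sP_mixed₁]; exact base2
    | .inl m, .inr c', _ => rw [sP_mixed₁]; exact base1
    | .inr c, .inl m', _ => rw [sP_mixed₂]; exact base1
    | .inr c, .inr c', .inl m'' => rw [sP_mixed₂]; exact base2
  have e1 : r2 A p q = min (sP A p q) (cross A p q) := rfl
  have e2 : r2 A q r = min (sP A q r) (cross A q r) := rfl
  rw [e1, e2]
  rcases min_cases (sP A p q) (cross A p q) with ⟨h1, _⟩ | ⟨h1, _⟩ <;>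
    rcases min_cases (sP A q r) (cross A q r) with ⟨h2, _⟩ | ⟨h2, _⟩ <;>
    rw [h1, h2]
  · exact base0
  · exact base2
  · exact base1
  · exact base3

lemma TT_inl (m m' : EPt X) (b b' : Bool) :
    TT A (.inl m) (.inl m') b b' = r1 A m m' := by
  rw [TT]; simp [pt2]

lemma cross_inl (m m' : EPt X) : cross A (.inl m) (.inl m') = r1 A m m' := by
  rw [cross, TT_inl, TT_inl, TT_inl, TT_inl, min_self, min_self]

lemma r2_inl (hD : 0 < D) (m m' : EPt X) : r2 A (.inl m) (.inl m') = r1 A m m' := by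
  obtain ⟨e, s⟩ := m
  obtain ⟨e', s'⟩ := m'
  rw [r2, cross_inl]
  by_cases h : e = e'
  · subst h
    have hsp : sP A (.inl ⟨e, s⟩) (.inl ⟨e, s'⟩) = |(s:ℝ) - (s':ℝ)| := by
      simp only [sP]; rw [if_pos trivial]
    rw [hsp, r1_edge A hD]
    exact min_self _
  · have hsp : sP A (.inl ⟨e, s⟩) (.inl ⟨e', s'⟩) = cross A (.inl ⟨e, s⟩) (.inl ⟨e', s'⟩) := by
      simp only [sP]
      rw [if_neg (by simpa using h)]
    rw [hsp, cross_inl]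
    exact min_self _

lemma r2_conn_same (hD : 0 < D) (ek : (X × X) × ℕ) (θ θ' : Icc (0:ℝ) (cV A ek)) :
    r2 A (.inr ⟨ek, θ⟩) (.inr ⟨ek, θ'⟩) = |(θ:ℝ) - (θ':ℝ)| := by
  have hsp : sP A (.inr ⟨ek, θ⟩) (.inr ⟨ek, θ'⟩) = |(θ:ℝ) - (θ':ℝ)| := by
    simp only [sP]; rw [if_pos trivial]
  have hUW : r1 A (cU A ek) (cW A ek) = cV A ek := rfl
  have hWU : r1 A (cW A ek) (cU A ek) = cV A ek := (r1_comm A _ _).trans rfl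
  have ht1 : (0:ℝ) ≤ (θ:ℝ) := θ.2.1
  have ht2 : (θ:ℝ) ≤ cV A ek := θ.2.2
  have ht3 : (0:ℝ) ≤ (θ':ℝ) := θ'.2.1
  have ht4 : (θ':ℝ) ≤ cV A ek := θ'.2.2
  apply le_antisymm
  · rw [r2, hsp]; exact min_le_left _ _
  · rw [r2, hsp]
    refine le_min (le_refl _) (le_min (le_min ?_ ?_) (le_min ?_ ?_))
    · rw [TT]; simp only [pt2]; rw [r1_self A hD]
      exact abs_le.mpr ⟨by linarith, by linarith⟩
    · rw [TT]; simp only [pt2]; rw [hUW]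
      exact abs_le.mpr ⟨by linarith, by linarith⟩
    · rw [TT]; simp only [pt2]; rw [hWU]
      exact abs_le.mpr ⟨by linarith, by linarith⟩
    · rw [TT]; simp only [pt2]; rw [r1_self A hD]
      exact abs_le.mpr ⟨by linarith, by linarith⟩

/-- the pseudometric space of edge and connector points -/
def pm : PseudoMetricSpace (PPt A) where
  dist p q := if h : 0 < D then r2 A p q else 0
  dist_self p := by
    split_ifs with h
    · exact r2_self A h p
    · rfl
  dist_comm p q := by
    split_ifs with h
    · exact r2_comm A p q
    · rfl
  dist_triangle p q r := by
    split_ifs with h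
    · exact r2_triangle A h p q r
    · norm_num

attribute [local instance] pm

lemma dist_pp (hD : 0 < D) (p q : PPt A) : dist p q = r2 A p q := by
  show (if h : 0 < D then r2 A p q else 0) = r2 A p q
  rw [dif_pos hD]

lemma dist_mkq (hD : 0 < D) (p q : PPt A) :
    dist (SeparationQuotient.mk p) (SeparationQuotient.mk q) = r2 A p q := by
  rw [SeparationQuotient.dist_mk, dist_pp A hD]

lemma mk_eq_of_r2 (hD : 0 < D) {p q : PPt A} (h : r2 A p q = 0) :
    SeparationQuotient.mk p = SeparationQuotient.mk q :=
  SeparationQuotient.mk_eq_mk.2 (Metric.inseparable_iff.2 (by rw [dist_pp A hD, h]))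

lemma mk_conn_zero (hD : 0 < D) (ek : (X × X) × ℕ) :
    SeparationQuotient.mk (.inr ⟨ek, ⟨0, le_refl _, cV_nonneg A hD ek⟩⟩ : PPt A) =
      SeparationQuotient.mk (.inl (cU A ek)) := by
  apply mk_eq_of_r2 A hD
  apply le_antisymm _ (r2_nonneg A hD _ _)
  have hTT : TT A (.inr ⟨ek, ⟨0, le_refl _, cV_nonneg A hD ek⟩⟩ : PPt A)
      (.inl (cU A ek)) true true = 0 := by
    rw [TT]
    simp only [pt2]
    rw [r1_self A hD]
    simp
  calc r2 A _ _ ≤ TT A _ _ true true := le_trans (r2_le_cross A _ _) (cross_le A _ _ true true)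
    _ = 0 := hTT

lemma mk_conn_top (hD : 0 < D) (ek : (X × X) × ℕ) :
    SeparationQuotient.mk (.inr ⟨ek, ⟨cV A ek, cV_nonneg A hD ek, le_refl _⟩⟩ : PPt A) =
      SeparationQuotient.mk (.inl (cW A ek)) := by
  apply mk_eq_of_r2 A hD
  apply le_antisymm _ (r2_nonneg A hD _ _)
  have hTT : TT A (.inr ⟨ek, ⟨cV A ek, cV_nonneg A hD ek, le_refl _⟩⟩ : PPt A)
      (.inl (cW A ek)) false true = 0 := by
    rw [TT]
    simp only [pt2]
    rw [r1_self A hD]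
    simp
  calc r2 A _ _ ≤ TT A _ _ false true := le_trans (r2_le_cross A _ _) (cross_le A _ _ false true)
    _ = 0 := hTT

lemma mk_edge_zero (hD : 0 < D) (e : X × X) :
    SeparationQuotient.mk (.inl (⟨e, ⟨0, le_refl _, dist_nonneg⟩⟩ : EPt X) : PPt A) =
      SeparationQuotient.mk (.inl (iM e.1)) := by
  apply mk_eq_of_r2 A hD
  apply le_antisymm _ (r2_nonneg A hD _ _)
  rw [r2_inl A hD]
  have h := rR_le A (⟨e, ⟨0, le_refl _, dist_nonneg⟩⟩ : EPt X) (iM e.1) (k := 0) (l := 0)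
    (by omega) (by omega)
  have h1 : pcost A (⟨e, ⟨0, le_refl _, dist_nonneg⟩⟩ : EPt X) 0 = 0 := by
    rw [pcost, aC0]
    simp [aF0]
  have h2 : pcost A (iM e.1) 0 = 0 := by
    rw [pcost, aC0]
    simp [iM, aF0]
  have h3 : aZ A e 0 = e.1 := aZ0 A e
  have h4 : aZ A ((iM e.1 : EPt X).1) 0 = e.1 := aZ0 A _
  rw [h1, h2, h3, h4] at h
  simp only [dist_self] at h
  exact le_trans (r1_le_rR A _ _) (by linarith)

lemma mk_edge_top (hD : 0 < D) (e : X × X) :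
    SeparationQuotient.mk (.inl (⟨e, ⟨dist e.1 e.2, dist_nonneg, le_refl _⟩⟩ : EPt X) : PPt A) =
      SeparationQuotient.mk (.inl (iM e.2)) := by
  apply mk_eq_of_r2 A hD
  apply le_antisymm _ (r2_nonneg A hD _ _)
  rw [r2_inl A hD]
  have h := rR_le A (⟨e, ⟨dist e.1 e.2, dist_nonneg, le_refl _⟩⟩ : EPt X) (iM e.2)
    (k := aN A e) (l := 0) (le_refl _) (by omega)
  have h1 : pcost A (⟨e, ⟨dist e.1 e.2, dist_nonneg, le_refl _⟩⟩ : EPt X) (aN A e) = 0 := by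
    rw [pcost, aCtop A e (le_refl _), aFtop A e (le_refl _)]
    simp
  have h2 : pcost A (iM e.2) 0 = 0 := by
    rw [pcost, aC0]
    simp [iM, aF0]
  have h3 : aZ A e (aN A e) = e.2 := aZtop A e (le_refl _)
  have h4 : aZ A ((iM e.2 : EPt X).1) 0 = e.2 := aZ0 A _
  rw [h1, h2, h3, h4] at h
  simp only [dist_self] at h
  exact le_trans (r1_le_rR A _ _) (by linarith)

/-! ### Generic geodesic segments -/

/-- there is a geodesic from `x` to `y` -/
def IsGeoSeg {Z : Type*} [MetricSpace Z] (x y : Z) : Prop :=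
  ∃ γ : ℝ → Z, γ 0 = x ∧ γ (dist x y) = y ∧
    ∀ s ∈ Icc (0:ℝ) (dist x y), ∀ t ∈ Icc (0:ℝ) (dist x y), dist (γ s) (γ t) = |s - t|

lemma isGeoSeg_symm {Z : Type*} [MetricSpace Z] {x y : Z} (h : IsGeoSeg x y) :
    IsGeoSeg y x := by
  obtain ⟨γ, h0, h1, hd⟩ := h
  refine ⟨fun t => γ (dist x y - t), ?_, ?_, ?_⟩
  · simpa using h1
  · rw [dist_comm y x]; simpa using h0
  · intro s hs t ht
    rw [dist_comm y x] at hs ht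
    have h1 : dist x y - s ∈ Icc (0:ℝ) (dist x y) := ⟨by linarith [hs.2], by linarith [hs.1]⟩
    have h2 : dist x y - t ∈ Icc (0:ℝ) (dist x y) := ⟨by linarith [ht.2], by linarith [ht.1]⟩
    rw [hd _ h1 _ h2]
    rw [abs_sub_comm]
    congr 1
    ring

lemma isGeoSeg_self {Z : Type*} [MetricSpace Z] (x : Z) : IsGeoSeg x x := by
  refine ⟨fun _ => x, rfl, rfl, ?_⟩
  intro s hs t ht
  simp only [dist_self] at hs ht ⊢
  have : s = 0 := le_antisymm hs.2 hs.1
  have : t = 0 := le_antisymm ht.2 ht.1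
  simp [*]

lemma isGeoSeg_concat {Z : Type*} [MetricSpace Z] {x y z : Z}
    (h : dist x z = dist x y + dist y z)
    (g1 : IsGeoSeg x y) (g2 : IsGeoSeg y z) : IsGeoSeg x z := by
  obtain ⟨γ1, h10, h11, h1d⟩ := g1
  obtain ⟨γ2, h20, h21, h2d⟩ := g2
  have hd1 : (0:ℝ) ≤ dist x y := dist_nonneg
  have hd2 : (0:ℝ) ≤ dist y z := dist_nonneg
  set d1 := dist x y with hdef1
  set d2 := dist y z with hdef2
  have key : ∀ s t, s ∈ Icc (0:ℝ) (dist x z) → t ∈ Icc (0:ℝ) (dist x z) → s ≤ t →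
      dist ((fun u => if u ≤ d1 then γ1 u else γ2 (u - d1)) s)
        ((fun u => if u ≤ d1 then γ1 u else γ2 (u - d1)) t) = t - s := by
    intro s t hs ht hst
    simp only
    by_cases ht' : t ≤ d1
    · rw [if_pos (le_trans hst ht'), if_pos ht']
      rw [h1d s ⟨hs.1, le_trans hst ht'⟩ t ⟨le_trans hs.1 hst, ht'⟩]
      rw [abs_of_nonpos (by linarith)]; ring
    · by_cases hs' : s ≤ d1
      · rw [if_pos hs', if_neg ht']
        push_neg at ht'
        have hmem1 : t - d1 ∈ Icc (0:ℝ) d2 := ⟨by linarith, by rw [h] at ht; linarith [ht.2]⟩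
        have e1 : dist (γ1 s) y = d1 - s := by
          have := h1d s ⟨hs.1, hs'⟩ d1 ⟨hd1, le_refl _⟩
          rw [h11] at this
          rw [this, abs_of_nonpos (by linarith)]; ring
        have e2 : dist y (γ2 (t - d1)) = t - d1 := by
          have := h2d 0 ⟨le_refl _, hd2⟩ (t - d1) hmem1
          rw [h20] at this
          rw [this, abs_of_nonpos (by linarith [hmem1.1])]; ring
        have e3 : dist x (γ1 s) = s := by
          have := h1d 0 ⟨le_refl _, hd1⟩ s ⟨hs.1, hs'⟩
          rw [h10] at this
          rw [this, abs_of_nonpos (by linarith [hs.1])]; ring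
        have e4 : dist (γ2 (t - d1)) z = d2 - (t - d1) := by
          have := h2d (t - d1) hmem1 d2 ⟨hd2, le_refl _⟩
          rw [h21] at this
          rw [this, abs_of_nonpos (by linarith [hmem1.2])]; ring
        apply le_antisymm
        · calc dist (γ1 s) (γ2 (t - d1)) ≤ dist (γ1 s) y + dist y (γ2 (t - d1)) :=
                dist_triangle _ _ _
            _ = t - s := by rw [e1, e2]; ring
        · have htri := dist_triangle4 x (γ1 s) (γ2 (t - d1)) z
          rw [e3, e4, h] at htri
          linarith
      · rw [if_neg hs', if_neg ht']
        push_neg at hs' ht'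
        have hmem1 : s - d1 ∈ Icc (0:ℝ) d2 := ⟨by linarith, by rw [h] at hs; linarith [hs.2]⟩
        have hmem2 : t - d1 ∈ Icc (0:ℝ) d2 := ⟨by linarith, by rw [h] at ht; linarith [ht.2]⟩
        rw [h2d _ hmem1 _ hmem2]
        rw [abs_of_nonpos (by linarith)]; ring
  refine ⟨fun u => if u ≤ d1 then γ1 u else γ2 (u - d1), ?_, ?_, ?_⟩
  · simp only
    rw [if_pos hd1, h10]
  · simp only
    by_cases hc : dist x z ≤ d1
    · have hz2 : d2 = 0 := le_antisymm (by rw [h] at hc; linarith) hd2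
      have hyz : y = z := by rw [← dist_eq_zero]; exact hz2
      rw [if_pos hc]
      have hxz : dist x z = d1 := by rw [h, hz2, add_zero]
      rw [hxz, h11, hyz]
    · rw [if_neg hc]
      have he : dist x z - d1 = d2 := by rw [h]; ring
      rw [he, h21]
  · intro s hs t ht
    rcases le_total s t with hst | hst
    · rw [key s t hs ht hst, abs_of_nonpos (by linarith)]; ring
    · rw [dist_comm, key t s ht hs hst, abs_of_nonneg (by linarith)]

lemma isGeoSeg_concat5 {Z : Type*} [MetricSpace Z] {a0 a1 a2 a3 a4 a5 : Z}
    (h : dist a0 a5 = dist a0 a1 + dist a1 a2 + dist a2 a3 + dist a3 a4 + dist a4 a5)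
    (g1 : IsGeoSeg a0 a1) (g2 : IsGeoSeg a1 a2) (g3 : IsGeoSeg a2 a3)
    (g4 : IsGeoSeg a3 a4) (g5 : IsGeoSeg a4 a5) : IsGeoSeg a0 a5 := by
  have t1 : dist a0 a2 ≤ dist a0 a1 + dist a1 a2 := dist_triangle _ _ _
  have t2 : dist a0 a3 ≤ dist a0 a2 + dist a2 a3 := dist_triangle _ _ _
  have t3 : dist a0 a4 ≤ dist a0 a3 + dist a3 a4 := dist_triangle _ _ _
  have t4 : dist a0 a5 ≤ dist a0 a4 + dist a4 a5 := dist_triangle _ _ _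
  have e2 : dist a0 a2 = dist a0 a1 + dist a1 a2 := le_antisymm t1 (by linarith)
  have e3 : dist a0 a3 = dist a0 a2 + dist a2 a3 := le_antisymm t2 (by linarith)
  have e4 : dist a0 a4 = dist a0 a3 + dist a3 a4 := le_antisymm t3 (by linarith)
  have e5 : dist a0 a5 = dist a0 a4 + dist a4 a5 := le_antisymm t4 (by linarith)
  exact isGeoSeg_concat e5
    (isGeoSeg_concat e4 (isGeoSeg_concat e3 (isGeoSeg_concat e2 g1 g2) g3) g4) g5

/-- build a geodesic segment from an exactly parametrised family -/
lemma isGeoSeg_mono {Z : Type*} [MetricSpace Z] (g : ℝ → Z) (a b : ℝ) (hab : a ≤ b)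
    (h : ∀ u ∈ Icc a b, ∀ v ∈ Icc a b, dist (g u) (g v) = |u - v|) :
    IsGeoSeg (g a) (g b) := by
  have hd : dist (g a) (g b) = b - a := by
    rw [h a ⟨le_refl _, hab⟩ b ⟨hab, le_refl _⟩, abs_of_nonpos (by linarith)]; ring
  refine ⟨fun t => g (a + min (max t 0) (b - a)), ?_, ?_, ?_⟩
  · simp only
    rw [max_self, min_eq_left (by linarith), add_zero]
  · simp only
    rw [hd, max_eq_left (by linarith), min_self]
    congr 1
    ring
  · intro s hs t ht
    rw [hd] at hs ht
    have hcs : min (max s 0) (b - a) = s := by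
      rw [max_eq_left hs.1, min_eq_left hs.2]
    have hct : min (max t 0) (b - a) = t := by
      rw [max_eq_left ht.1, min_eq_left ht.2]
    simp only
    rw [hcs, hct, h (a + s) ⟨by linarith [hs.1], by linarith [hs.2]⟩
      (a + t) ⟨by linarith [ht.1], by linarith [ht.2]⟩]
    congr 1
    ring

/-! ### Geodesics in the quotient -/

def eProj (e : X × X) (u : ℝ) : EPt X :=
  ⟨e, ⟨max 0 (min u (dist e.1 e.2)), le_max_left _ _, max_le dist_nonneg (min_le_right _ _)⟩⟩

lemma eProj_val (e : X × X) {u : ℝ} (hu : u ∈ Icc (0:ℝ) (dist e.1 e.2)) :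
    (((eProj e u).2 : Icc (0:ℝ) (dist e.1 e.2)) : ℝ) = u := by
  simp only [eProj]
  rw [min_eq_left hu.2, max_eq_right hu.1]

lemma eProj_eta (e : X × X) (x : Icc (0:ℝ) (dist e.1 e.2)) :
    eProj e (x : ℝ) = ⟨e, x⟩ :=
  congrArg (Sigma.mk e) (Subtype.ext (by
    simp only [eProj]
    rw [min_eq_left x.2.2, max_eq_right x.2.1]))

lemma dist_mm (hD : 0 < D) (m m' : EPt X) :
    dist (SeparationQuotient.mk (.inl m : PPt A)) (SeparationQuotient.mk (.inl m')) =
      r1 A m m' := by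
  rw [dist_mkq A hD, r2_inl A hD]

lemma isGeo_edge_mono (hD : 0 < D) (e : X × X) (σ τ : Icc (0:ℝ) (dist e.1 e.2))
    (hστ : (σ:ℝ) ≤ (τ:ℝ)) :
    IsGeoSeg (SeparationQuotient.mk (.inl ⟨e, σ⟩ : PPt A))
      (SeparationQuotient.mk (.inl ⟨e, τ⟩)) := by
  have hg := isGeoSeg_mono
    (fun u => SeparationQuotient.mk (.inl (eProj e u) : PPt A)) (σ:ℝ) (τ:ℝ) hστ ?_
  · simpa only [eProj_eta] using hg
  · intro u hu v hv
    have hu' : u ∈ Icc (0:ℝ) (dist e.1 e.2) := ⟨le_trans σ.2.1 hu.1, le_trans hu.2 τ.2.2⟩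
    have hv' : v ∈ Icc (0:ℝ) (dist e.1 e.2) := ⟨le_trans σ.2.1 hv.1, le_trans hv.2 τ.2.2⟩
    rw [dist_mm A hD]
    have h1 : r1 A (eProj e u) (eProj e v) =
        |(((eProj e u).2 : Icc (0:ℝ) (dist e.1 e.2)) : ℝ) -
          (((eProj e v).2 : Icc (0:ℝ) (dist e.1 e.2)) : ℝ)| :=
      r1_edge A hD e _ _
    rw [h1, eProj_val e hu', eProj_val e hv']

lemma isGeo_edge (hD : 0 < D) (e : X × X) (σ τ : Icc (0:ℝ) (dist e.1 e.2)) :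
    IsGeoSeg (SeparationQuotient.mk (.inl ⟨e, σ⟩ : PPt A))
      (SeparationQuotient.mk (.inl ⟨e, τ⟩)) := by
  rcases le_total (σ:ℝ) (τ:ℝ) with h | h
  · exact isGeo_edge_mono A hD e σ τ h
  · exact isGeoSeg_symm (isGeo_edge_mono A hD e τ σ h)

def cProj (hD : 0 < D) (ek : (X × X) × ℕ) (u : ℝ) : CPt A :=
  ⟨ek, ⟨max 0 (min u (cV A ek)), le_max_left _ _,
    max_le (cV_nonneg A hD ek) (min_le_right _ _)⟩⟩

lemma cProj_val (hD : 0 < D) (ek : (X × X) × ℕ) {u : ℝ} (hu : u ∈ Icc (0:ℝ) (cV A ek)) :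
    (((cProj A hD ek u).2 : Icc (0:ℝ) (cV A ek)) : ℝ) = u := by
  simp only [cProj]
  rw [min_eq_left hu.2, max_eq_right hu.1]

lemma cProj_eta (hD : 0 < D) (ek : (X × X) × ℕ) (x : Icc (0:ℝ) (cV A ek)) :
    cProj A hD ek (x : ℝ) = ⟨ek, x⟩ :=
  congrArg (Sigma.mk ek) (Subtype.ext (by
    simp only [cProj]
    rw [min_eq_left x.2.2, max_eq_right x.2.1]))

lemma dist_cc (hD : 0 < D) (ek : (X × X) × ℕ) (θ θ' : Icc (0:ℝ) (cV A ek)) :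
    dist (SeparationQuotient.mk (.inr ⟨ek, θ⟩ : PPt A)) (SeparationQuotient.mk (.inr ⟨ek, θ'⟩)) =
      |(θ:ℝ) - (θ':ℝ)| := by
  rw [dist_mkq A hD, r2_conn_same A hD]

lemma isGeo_conn_mono (hD : 0 < D) (ek : (X × X) × ℕ) (θ θ' : Icc (0:ℝ) (cV A ek))
    (hθ : (θ:ℝ) ≤ (θ':ℝ)) :
    IsGeoSeg (SeparationQuotient.mk (.inr ⟨ek, θ⟩ : PPt A))
      (SeparationQuotient.mk (.inr ⟨ek, θ'⟩)) := by
  have hg := isGeoSeg_mono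
    (fun u => SeparationQuotient.mk (.inr (cProj A hD ek u) : PPt A)) (θ:ℝ) (θ':ℝ) hθ ?_
  · simpa only [cProj_eta] using hg
  · intro u hu v hv
    have hu' : u ∈ Icc (0:ℝ) (cV A ek) := ⟨le_trans θ.2.1 hu.1, le_trans hu.2 θ'.2.2⟩
    have hv' : v ∈ Icc (0:ℝ) (cV A ek) := ⟨le_trans θ.2.1 hv.1, le_trans hv.2 θ'.2.2⟩
    have h1 : dist (SeparationQuotient.mk (.inr (cProj A hD ek u) : PPt A))
        (SeparationQuotient.mk (.inr (cProj A hD ek v))) =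
        |(((cProj A hD ek u).2 : Icc (0:ℝ) (cV A ek)) : ℝ) -
          (((cProj A hD ek v).2 : Icc (0:ℝ) (cV A ek)) : ℝ)| :=
      dist_cc A hD ek _ _
    rw [h1, cProj_val A hD ek hu', cProj_val A hD ek hv']

lemma isGeo_conn (hD : 0 < D) (ek : (X × X) × ℕ) (θ θ' : Icc (0:ℝ) (cV A ek)) :
    IsGeoSeg (SeparationQuotient.mk (.inr ⟨ek, θ⟩ : PPt A))
      (SeparationQuotient.mk (.inr ⟨ek, θ'⟩)) := by
  rcases le_total (θ:ℝ) (θ':ℝ) with h | h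
  · exact isGeo_conn_mono A hD ek θ θ' h
  · exact isGeoSeg_symm (isGeo_conn_mono A hD ek θ' θ h)

/-- the connector traverse as a geodesic between the two attachment points -/
lemma isGeo_connector (hD : 0 < D) (ek : (X × X) × ℕ) :
    IsGeoSeg (SeparationQuotient.mk (.inl (cU A ek) : PPt A))
      (SeparationQuotient.mk (.inl (cW A ek))) := by
  rw [← mk_conn_zero A hD ek, ← mk_conn_top A hD ek]
  exact isGeo_conn A hD ek _ _

lemma rR_existsB (p q : EPt X) : ∃ k l : ℕ, k ≤ aN A p.1 ∧ l ≤ aN A q.1 ∧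
    rR A p q = pcost A p k + dist (aZ A p.1 k) (aZ A q.1 l) + pcost A q l := by
  obtain ⟨kl, hmem, h⟩ := Finset.exists_mem_eq_inf'
    (s := (pPorts A p) ×ˢ (pPorts A q))
    ((pPorts_nonempty A p).product (pPorts_nonempty A q))
    (fun kl => pcost A p kl.1 + dist (aZ A p.1 kl.1) (aZ A q.1 kl.2) + pcost A q kl.2)
  rw [Finset.mem_product] at hmem
  obtain ⟨h1, h2⟩ := hmem
  rw [pPorts, Finset.mem_range] at h1 h2
  exact ⟨kl.1, kl.2, by omega, by omega, by rw [rR]; exact h⟩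

/-- the long edge between two embedded points of `X` -/
lemma isGeo_long (hD : 0 < D) (z w : X) :
    IsGeoSeg (SeparationQuotient.mk (.inl (iM z) : PPt A))
      (SeparationQuotient.mk (.inl (iM w))) := by
  have h0 := mk_edge_zero (A := A) hD (z, w)
  have h1 := mk_edge_top (A := A) hD (z, w)
  rw [← h0, ← h1]
  exact isGeo_edge A hD (z, w) _ _

lemma isGeo_MM (hD : 0 < D) (m m' : EPt X) :
    IsGeoSeg (SeparationQuotient.mk (.inl m : PPt A)) (SeparationQuotient.mk (.inl m')) := by
  obtain ⟨e, s⟩ := m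
  obtain ⟨e', s'⟩ := m'
  by_cases hee : e = e'
  · subst hee
    exact isGeo_edge A hD e s s'
  · obtain ⟨k, l, hk, hl, hval⟩ := rR_existsB A ⟨e, s⟩ ⟨e', s'⟩
    simp only at hk hl hval
    -- the six points of the broken geodesic
    set a0 := SeparationQuotient.mk (.inl ⟨e, s⟩ : PPt A) with ha0
    set a1 := SeparationQuotient.mk (.inl (cU A (e, k)) : PPt A) with ha1
    set a2 := SeparationQuotient.mk (.inl (cW A (e, k)) : PPt A) with ha2
    set a3 := SeparationQuotient.mk (.inl (cW A (e', l)) : PPt A) with ha3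
    set a4 := SeparationQuotient.mk (.inl (cU A (e', l)) : PPt A) with ha4
    set a5 := SeparationQuotient.mk (.inl ⟨e', s'⟩ : PPt A) with ha5
    have hminK : min (e, k).2 (aN A (e, k).1) = k := min_eq_left hk
    have hminL : min (e', l).2 (aN A (e', l).1) = l := min_eq_left hl
    have hzk : cW A (e, k) = iM (aZ A e k) := by rw [cW, hminK]
    have hwl : cW A (e', l) = iM (aZ A e' l) := by rw [cW, hminL]
    -- the geodesic pieces
    have g1 : IsGeoSeg a0 a1 := isGeo_edge A hD e s (cU A (e, k)).2
    have g2 : IsGeoSeg a1 a2 := isGeo_connector A hD (e, k)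
    have g3 : IsGeoSeg a2 a3 := by
      rw [ha2, ha3, hzk, hwl]
      exact isGeo_long A hD _ _
    have g4 : IsGeoSeg a3 a4 := isGeoSeg_symm (isGeo_connector A hD (e', l))
    have g5 : IsGeoSeg a4 a5 := isGeo_edge A hD e' (cU A (e', l)).2 s'
    -- the lengths
    have hl1 : dist a0 a1 = |(s:ℝ) - cPos A (e, k)| := by
      rw [ha0, ha1, dist_mm A hD]
      exact r1_edge A hD e s _
    have hl2 : dist a1 a2 = cV A (e, k) := by
      rw [ha1, ha2, dist_mm A hD]
      rfl
    have hl3 : dist a2 a3 = dist (aZ A e k) (aZ A e' l) := by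
      rw [ha2, ha3, hzk, hwl, dist_mm A hD, r1_iM A hD]
    have hl4 : dist a3 a4 = cV A (e', l) := by
      rw [ha3, ha4, dist_mm A hD, r1_comm]
      rfl
    have hl5 : dist a4 a5 = |cPos A (e', l) - (s':ℝ)| := by
      rw [ha4, ha5, dist_mm A hD]
      have := r1_edge A hD e' (cU A (e', l)).2 s'
      exact this
    -- total distance
    have hd05 : dist a0 a5 = pcost A ⟨e, s⟩ k + dist (aZ A e k) (aZ A e' l)
        + pcost A ⟨e', s'⟩ l := by
      rw [ha0, ha5, dist_mm A hD, r1]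
      rw [if_neg (by simpa using hee)]
      exact hval
    -- the path sum equals the distance
    have hple1 := path_le_route A hD e s hk
    have hple2 := path_le_route A hD e' s' hl
    have htri : dist a0 a5 ≤ dist a0 a1 + dist a1 a2 + dist a2 a3 + dist a3 a4 + dist a4 a5 := by
      calc dist a0 a5 ≤ dist a0 a2 + dist a2 a4 + dist a4 a5 := dist_triangle4 _ _ _ _
        _ ≤ (dist a0 a1 + dist a1 a2) + (dist a2 a3 + dist a3 a4) + dist a4 a5 := by
            have := dist_triangle a0 a1 a2
            have := dist_triangle a2 a3 a4
            linarith
        _ = _ := by ring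
    have habs : |cPos A (e', l) - (s':ℝ)| = |(s':ℝ) - cPos A (e', l)| := abs_sub_comm _ _
    have hsum : dist a0 a5 = dist a0 a1 + dist a1 a2 + dist a2 a3 + dist a3 a4 + dist a4 a5 := by
      apply le_antisymm htri
      rw [hl1, hl2, hl3, hl4, hl5, hd05, habs]
      have h1 : |(s:ℝ) - cPos A (e, k)| + cV A (e, k) ≤ pcost A ⟨e, s⟩ k := hple1
      have h2 : |(s':ℝ) - cPos A (e', l)| + cV A (e', l) ≤ pcost A ⟨e', s'⟩ l := hple2
      linarith
    exact isGeoSeg_concat5 hsum g1 g2 g3 g4 g5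

/-- the connector piece from an interior point to one of its ports. -/
lemma port_piece (hD : 0 < D) (ek : (X × X) × ℕ) (θ : Icc (0:ℝ) (cV A ek)) (b : Bool) :
    IsGeoSeg (SeparationQuotient.mk (.inr ⟨ek, θ⟩ : PPt A))
        (SeparationQuotient.mk (.inl (pt2 A (.inr ⟨ek, θ⟩) b).2)) ∧
      dist (SeparationQuotient.mk (.inr ⟨ek, θ⟩ : PPt A))
        (SeparationQuotient.mk (.inl (pt2 A (.inr ⟨ek, θ⟩) b).2)) =
          (pt2 A (.inr ⟨ek, θ⟩) b).1 := by
  match b with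
  | true =>
      have h0 := mk_conn_zero (A := A) hD ek
      constructor
      · rw [show (pt2 A (.inr ⟨ek, θ⟩) true).2 = cU A ek from rfl, ← h0]
        exact isGeo_conn A hD ek θ _
      · rw [show (pt2 A (.inr ⟨ek, θ⟩) true).2 = cU A ek from rfl, ← h0, dist_cc A hD]
        show |(θ:ℝ) - (0:ℝ)| = (θ:ℝ)
        rw [sub_zero, abs_of_nonneg θ.2.1]
  | false =>
      have h0 := mk_conn_top (A := A) hD ek
      constructor
      · rw [show (pt2 A (.inr ⟨ek, θ⟩) false).2 = cW A ek from rfl, ← h0]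
        exact isGeo_conn A hD ek θ _
      · rw [show (pt2 A (.inr ⟨ek, θ⟩) false).2 = cW A ek from rfl, ← h0, dist_cc A hD]
        show |(θ:ℝ) - (cV A ek)| = cV A ek - (θ:ℝ)
        rw [abs_of_nonpos (by linarith [θ.2.2])]
        ring

lemma isGeo_CM (hD : 0 < D) (c : CPt A) (m : EPt X) :
    IsGeoSeg (SeparationQuotient.mk (.inr c : PPt A)) (SeparationQuotient.mk (.inl m)) := by
  obtain ⟨ek, θ⟩ := c
  have hd : dist (SeparationQuotient.mk (.inr ⟨ek, θ⟩ : PPt A)) (SeparationQuotient.mk (.inl m))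
      = cross A (.inr ⟨ek, θ⟩) (.inl m) := by
    rw [dist_mkq A hD, r2]
    exact (congrArg (min · _) (sP_mixed₂ A _ _)).trans (min_self _)
  obtain ⟨b, b', hbb⟩ := cross_cases A (.inr ⟨ek, θ⟩) (.inl m)
  have hTT : TT A (.inr ⟨ek, θ⟩ : PPt A) (.inl m) b b' =
      (pt2 A (.inr ⟨ek, θ⟩) b).1 + r1 A (pt2 A (.inr ⟨ek, θ⟩) b).2 m := by
    rw [TT]
    match b' with
    | true => show _ + r1 A _ m + 0 = _; ring
    | false => show _ + r1 A _ m + 0 = _; ring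
  obtain ⟨g1, d1⟩ := port_piece A hD ek θ b
  have g2 : IsGeoSeg (SeparationQuotient.mk (.inl (pt2 A (.inr ⟨ek, θ⟩) b).2 : PPt A))
      (SeparationQuotient.mk (.inl m)) := isGeo_MM A hD _ m
  have d2 : dist (SeparationQuotient.mk (.inl (pt2 A (.inr ⟨ek, θ⟩) b).2 : PPt A))
      (SeparationQuotient.mk (.inl m)) = r1 A (pt2 A (.inr ⟨ek, θ⟩) b).2 m := dist_mm A hD _ _
  apply isGeoSeg_concat _ g1 g2
  rw [hd, hbb, hTT, d1, d2]

lemma isGeo_CC (hD : 0 < D) (c c' : CPt A) :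
    IsGeoSeg (SeparationQuotient.mk (.inr c : PPt A)) (SeparationQuotient.mk (.inr c')) := by
  obtain ⟨ek, θ⟩ := c
  obtain ⟨ek', θ'⟩ := c'
  by_cases h : ek = ek'
  · subst h
    exact isGeo_conn A hD ek θ θ'
  · have hd : dist (SeparationQuotient.mk (.inr ⟨ek, θ⟩ : PPt A))
        (SeparationQuotient.mk (.inr ⟨ek', θ'⟩)) = cross A (.inr ⟨ek, θ⟩) (.inr ⟨ek', θ'⟩) := by
      rw [dist_mkq A hD, r2]
      have hsp : sP A (.inr ⟨ek, θ⟩) (.inr ⟨ek', θ'⟩) =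
          cross A (.inr ⟨ek, θ⟩) (.inr ⟨ek', θ'⟩) := by
        simp only [sP]
        rw [if_neg (by simpa using h)]
      rw [hsp, min_self]
    obtain ⟨b, b', hbb⟩ := cross_cases A (.inr ⟨ek, θ⟩) (.inr ⟨ek', θ'⟩)
    obtain ⟨g1, d1⟩ := port_piece A hD ek θ b
    obtain ⟨g3, d3⟩ := port_piece A hD ek' θ' b'
    set P1 := SeparationQuotient.mk (.inr ⟨ek, θ⟩ : PPt A) with hP1
    set P2 := SeparationQuotient.mk (.inl (pt2 A (.inr ⟨ek, θ⟩) b).2 : PPt A) with hP2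
    set P3 := SeparationQuotient.mk (.inl (pt2 A (.inr ⟨ek', θ'⟩) b').2 : PPt A) with hP3
    set P4 := SeparationQuotient.mk (.inr ⟨ek', θ'⟩ : PPt A) with hP4
    have g2 : IsGeoSeg P2 P3 := isGeo_MM A hD _ _
    have d2 : dist P2 P3 =
        r1 A (pt2 A (.inr ⟨ek, θ⟩) b).2 (pt2 A (.inr ⟨ek', θ'⟩) b').2 := dist_mm A hD _ _
    have d3' : dist P3 P4 = (pt2 A (.inr ⟨ek', θ'⟩) b').1 := by
      rw [dist_comm]; exact d3
    have hTT : TT A (.inr ⟨ek, θ⟩ : PPt A) (.inr ⟨ek', θ'⟩) b b' =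
        (pt2 A (.inr ⟨ek, θ⟩) b).1
          + r1 A (pt2 A (.inr ⟨ek, θ⟩) b).2 (pt2 A (.inr ⟨ek', θ'⟩) b').2
          + (pt2 A (.inr ⟨ek', θ'⟩) b').1 := rfl
    have htot : dist P1 P4 = dist P1 P2 + dist P2 P3 + dist P3 P4 := by
      apply le_antisymm (dist_triangle4 _ _ _ _)
      rw [hd, hbb, hTT, d1, d2, d3']
    have h24 : dist P2 P4 = dist P2 P3 + dist P3 P4 := by
      apply le_antisymm (dist_triangle _ _ _)
      have ht := dist_triangle P1 P2 P4
      linarith [htot, ht]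
    have h14 : dist P1 P4 = dist P1 P2 + dist P2 P4 := by rw [htot, h24]; ring
    exact isGeoSeg_concat h14 g1 (isGeoSeg_concat h24 g2 (isGeoSeg_symm g3))

lemma geo_all (hD : 0 < D) (p q : PPt A) :
    IsGeoSeg (SeparationQuotient.mk p) (SeparationQuotient.mk q) := by
  match p, q with
  | .inl m, .inl m' => exact isGeo_MM A hD m m'
  | .inl m, .inr c => exact isGeoSeg_symm (isGeo_CM A hD c m)
  | .inr c, .inl m => exact isGeo_CM A hD c m
  | .inr c, .inr c' => exact isGeo_CC A hD c c'

lemma cobound_all (hD : 0 < D) (p : PPt A) :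
    ∃ x : X, dist (SeparationQuotient.mk (.inl (iM x) : PPt A)) (SeparationQuotient.mk p)
      ≤ 3 * D := by
  match p with
  | .inl m =>
      obtain ⟨x, hx⟩ := cobound_M A hD m
      refine ⟨x, ?_⟩
      rw [dist_mm A hD, r1_comm]
      exact hx
  | .inr c =>
      obtain ⟨ek, θ⟩ := c
      refine ⟨aZ A ek.1 (min ek.2 (aN A ek.1)), ?_⟩
      have h1 : dist (SeparationQuotient.mk
            (.inl (iM (aZ A ek.1 (min ek.2 (aN A ek.1)))) : PPt A))
          (SeparationQuotient.mk (.inr ⟨ek, θ⟩)) ≤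
          TT A (.inl (iM (aZ A ek.1 (min ek.2 (aN A ek.1)))) : PPt A) (.inr ⟨ek, θ⟩)
            true false := by
        rw [dist_mkq A hD]
        exact le_trans (r2_le_cross A _ _) (cross_le A _ _ true false)
      have h2 : TT A (.inl (iM (aZ A ek.1 (min ek.2 (aN A ek.1)))) : PPt A) (.inr ⟨ek, θ⟩)
          true false = r1 A (iM (aZ A ek.1 (min ek.2 (aN A ek.1)))) (cW A ek)
            + (cV A ek - (θ:ℝ)) := by
        simp only [TT, pt2]
        ring
      have h3 : r1 A (iM (aZ A ek.1 (min ek.2 (aN A ek.1)))) (cW A ek) = 0 := by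
        rw [cW]
        exact r1_self A hD _
      have h4 := cV_le_2D A hD ek
      have h5 : (0:ℝ) ≤ (θ:ℝ) := θ.2.1
      rw [h2, h3] at h1
      linarith

lemma emb_iso (hD : 0 < D) (x y : X) :
    dist (SeparationQuotient.mk (.inl (iM x) : PPt A))
      (SeparationQuotient.mk (.inl (iM y))) = dist x y := by
  rw [dist_mm A hD, r1_iM A hD]

end QRuling

/-- Lemma A.5: a space admitting a `D`-quasi-ruling is `(1,4D)`-quasi-
isometric to a geodesic space. -/
theorem statement14 {X : Type u} [mX : MetricSpace X] (D : ℝ) (hD : 0 ≤ D)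
    (hX : AdmitsQuasiRuling X D) :
    ∃ (Xg : Type u) (mXg : MetricSpace Xg), @GeodesicSpace Xg mXg ∧
      ∃ ι : X → Xg, @IsQuasiIsometryWith X Xg mX mXg 1 (4 * D) ι := by
  rcases isEmpty_or_nonempty X with hemp | hne
  · exact ⟨X, mX, fun x y => (hemp.false x).elim, id,
      ⟨fun x y => (hemp.false x).elim, fun x => (hemp.false x).elim⟩⟩
  · have hD0 : 0 < D := by
      obtain ⟨x⟩ := hne
      obtain ⟨a, b, γ, hab, hγa, hγb, hR⟩ := hX x x
      obtain ⟨c, hc, ε, hε, hloc⟩ := hR.noJump a ⟨le_refl a, hab⟩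
      have h0 : (0:ℝ) ≤ c := by
        have h1 := hloc a ⟨le_refl a, hab⟩ (by simpa using hε)
        simpa using h1
      linarith
    let A : ∀ x y : X, QRuling.AnchorData D x y :=
      fun x y => Classical.choice (QRuling.exists_anchorData hD0 hX x y)
    letI : PseudoMetricSpace (QRuling.PPt A) := QRuling.pm A
    refine ⟨SeparationQuotient (QRuling.PPt A), inferInstance, ?_,
      fun x => SeparationQuotient.mk (.inl (QRuling.iM x)), ?_, ?_⟩
    · intro ξ η
      obtain ⟨p, rfl⟩ := SeparationQuotient.surjective_mk ξ
      obtain ⟨q, rfl⟩ := SeparationQuotient.surjective_mk η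
      exact QRuling.geo_all A hD0 p q
    · intro x y
      have he := QRuling.emb_iso A hD0 x y
      constructor
      · rw [he, div_one]; linarith
      · rw [he, one_mul]; linarith
    · intro ξ
      obtain ⟨p, rfl⟩ := SeparationQuotient.surjective_mk ξ
      obtain ⟨x, hx⟩ := QRuling.cobound_all A hD0 p
      exact ⟨x, by rw [SeparationQuotient.dist_mk] at hx ⊢; linarith⟩
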